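/- arXiv:math/0608140 — 6 statements merged into one kernel-verified Lean document; each statement's English description precedes it below -/
import Mathlib

section
/- For every dimension d ≥ 1 and every integer k ≥ 0, the sequence τ_k^(d)(n) = β_k(T^(d)[n])/n^d, defined for n ≥ 3, converges as n → ∞. -/
open Filter Topology

/-- The `d`-dimensional kings graph on `Fin (n 0) × ⋯ × Fin (n (d-1))`:
distinct vertices are adjacent iff their coordinates differ by at most 1. -/
def kingsGraph (d : ℕ) (n : Fin d → ℕ) :
    SimpleGraph (∀ i : Fin d, Fin (n i)) where
  Adj u v := u ≠ v ∧ ∀ i, |((v i : ℤ)) - (u i : ℤ)| ≤ 1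
  symm := by
    constructor
    rintro u v ⟨h1, h2⟩
    exact ⟨h1.symm, fun i => by rw [abs_sub_comm]; exact h2 i⟩
  loopless := by constructor; intro v h; exact h.1 rfl

/-- The `d`-dimensional toroidal kings graph on `ZMod (n 0) × ⋯ × ZMod (n (d-1))`:
distinct vertices are adjacent iff each coordinate difference is `-1`, `0` or `1`. -/
def torusGraph (d : ℕ) (n : Fin d → ℕ) :
    SimpleGraph (∀ i : Fin d, ZMod (n i)) where
  Adj u v := u ≠ v ∧ ∀ i, v i - u i = -1 ∨ v i - u i = 0 ∨ v i - u i = 1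
  symm := by
    constructor
    rintro u v ⟨h1, h2⟩
    refine ⟨h1.symm, fun i => ?_⟩
    rcases h2 i with h | h | h
    · right; right; rw [show u i - v i = -(v i - u i) by ring, h]; norm_num
    · right; left; rw [show u i - v i = -(v i - u i) by ring, h]; norm_num
    · left; rw [show u i - v i = -(v i - u i) by ring, h]
  loopless := by constructor; intro v h; exact h.1 rfl

/-- A set `S` of vertices is `k`-dependent if every vertex of `S`
has at most `k` neighbors in `S`. -/
def IsKDependent {V : Type*} (G : SimpleGraph V) (k : ℕ) (S : Set V) : Prop :=
  ∀ v ∈ S, (S ∩ G.neighborSet v).ncard ≤ k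

/-- `betaK G k` is the maximum cardinality of a `k`-dependent set in `G`. -/
noncomputable def betaK {V : Type*} (G : SimpleGraph V) (k : ℕ) : ℕ :=
  sSup {m | ∃ S : Set V, IsKDependent G k S ∧ S.ncard = m}

/-- A set `S` of vertices is half-dependent if every vertex `v ∈ S`
has at most `|N(v)|/2` neighbors in `S`. -/
def IsHalfDependent {V : Type*} (G : SimpleGraph V) (S : Set V) : Prop :=
  ∀ v ∈ S, 2 * (S ∩ G.neighborSet v).ncard ≤ (G.neighborSet v).ncard

/-- `halfNum G` is the maximum cardinality of a half-dependent set in `G`. -/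
noncomputable def halfNum {V : Type*} (G : SimpleGraph V) : ℕ :=
  sSup {m | ∃ S : Set V, IsHalfDependent G S ∧ S.ncard = m}

/-- A graph is vertex-transitive if any vertex can be mapped to any other
by a graph automorphism. -/
def IsVertexTransitive {V : Type*} (G : SimpleGraph V) : Prop :=
  ∀ u v : V, ∃ f : G ≃g G, f u = v

section helpers
variable {V W : Type*}

lemma isKDependent_empty (G : SimpleGraph V) (k : ℕ) : IsKDependent G k ∅ :=
  fun v hv => absurd hv (Set.notMem_empty v)

lemma betaK_bdd [Fintype V] (G : SimpleGraph V) (k : ℕ) :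
    BddAbove {m | ∃ S : Set V, IsKDependent G k S ∧ S.ncard = m} := by
  refine ⟨Fintype.card V, ?_⟩
  rintro m ⟨S, -, rfl⟩
  have := Set.ncard_le_ncard (Set.subset_univ S) Set.finite_univ; simpa [Set.ncard_univ, Nat.card_eq_fintype_card] using this

lemma betaK_spec [Fintype V] (G : SimpleGraph V) (k : ℕ) :
    ∃ S : Set V, IsKDependent G k S ∧ S.ncard = betaK G k := by
  have h := Nat.sSup_mem (s := {m | ∃ S : Set V, IsKDependent G k S ∧ S.ncard = m})
    ⟨0, ∅, isKDependent_empty G k, by simp⟩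
    (betaK_bdd G k)
  exact h

lemma le_betaK [Fintype V] {G : SimpleGraph V} {k : ℕ} {S : Set V}
    (h : IsKDependent G k S) : S.ncard ≤ betaK G k :=
  le_csSup (betaK_bdd G k) ⟨S, h, rfl⟩

lemma betaK_le [Fintype V] {G : SimpleGraph V} {k m : ℕ}
    (h : ∀ S : Set V, IsKDependent G k S → S.ncard ≤ m) : betaK G k ≤ m := by
  have hne : Set.Nonempty {m | ∃ S : Set V, IsKDependent G k S ∧ S.ncard = m} :=
    ⟨0, ∅, isKDependent_empty G k, by simp⟩
  apply csSup_le hne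
  rintro b ⟨S, hS, rfl⟩; exact h S hS

lemma IsKDependent.preimage [Finite W] {G : SimpleGraph V} {H : SimpleGraph W} {k : ℕ}
    {T : Set W} (hT : IsKDependent H k T) {f : V → W} (hf : Function.Injective f)
    (hadj : ∀ u v, G.Adj u v → H.Adj (f u) (f v)) :
    IsKDependent G k (f ⁻¹' T) := by
  intro v hv
  have hsub : f '' (f ⁻¹' T ∩ G.neighborSet v) ⊆ T ∩ H.neighborSet (f v) := by
    rintro w ⟨u, ⟨hu, hadj'⟩, rfl⟩
    exact ⟨hu, hadj v u hadj'⟩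
  calc (f ⁻¹' T ∩ G.neighborSet v).ncard
      = (f '' (f ⁻¹' T ∩ G.neighborSet v)).ncard :=
        (Set.ncard_image_of_injective _ hf).symm
    _ ≤ (T ∩ H.neighborSet (f v)).ncard := Set.ncard_le_ncard hsub (Set.toFinite _)
    _ ≤ k := hT (f v) hv

end helpers

lemma zmod_sub_small {m a b : ℕ} (ha : a + 2 ≤ m) (hb : b + 2 ≤ m) {c : ℤ}
    (hc : |c| ≤ 1) (h : (b : ZMod m) - (a : ZMod m) = (c : ZMod m)) :
    (b : ℤ) - (a : ℤ) = c := by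
  have h0 : (((b : ℤ) - (a : ℤ) - c : ℤ) : ZMod m) = 0 := by
    push_cast
    rw [sub_eq_zero, sub_eq_iff_eq_add]
    rw [sub_eq_iff_eq_add] at h
    exact_mod_cast h
  have hdvd := (ZMod.intCast_zmod_eq_zero_iff_dvd _ m).mp h0
  have h2 : |(b : ℤ) - (a : ℤ) - c| < m := by
    rw [abs_le] at hc; rw [abs_lt]; omega
  have := Int.eq_zero_of_abs_lt_dvd hdvd h2
  omega

section pack
variable {d k n m q : ℕ}

lemma pack_bound (hq : q * (n+1) ≤ m) (j : Fin q) (x : Fin n) :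
    (j : ℕ) * (n+1) + (x : ℕ) + 2 ≤ m := by
  have h1 : (j : ℕ) + 1 ≤ q := j.isLt
  have h2 : (x : ℕ) + 1 ≤ n := x.isLt
  nlinarith

lemma pack_key (hq : q * (n+1) ≤ m) {j j' : Fin q} {x x' : Fin n} {c : ℤ} (hc : |c| ≤ 1)
    (h : (((j' : ℕ) * (n+1) + (x' : ℕ) : ℕ) : ZMod m) - (((j : ℕ) * (n+1) + (x : ℕ) : ℕ) : ZMod m)
      = (c : ZMod m)) :
    j = j' ∧ (x' : ℤ) - (x : ℤ) = c := by
  have hint := zmod_sub_small (pack_bound hq j x) (pack_bound hq j' x') hc h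
  push_cast at hint
  have heq : ((j' : ℤ) - j) * ((n : ℤ) + 1) = c + (x : ℤ) - x' := by linarith
  have hx : (x : ℤ) < n := by exact_mod_cast x.isLt
  have hx' : 0 ≤ (x' : ℤ) := Int.ofNat_nonneg _
  have hx2 : (x' : ℤ) < n := by exact_mod_cast x'.isLt
  have hx3 : 0 ≤ (x : ℤ) := Int.ofNat_nonneg _
  have hcc := abs_le.mp hc
  have hj : (j' : ℤ) - j = 0 := by
    rcases lt_trichotomy ((j' : ℤ) - j) 0 with hlt | h0 | hgt
    · have h1 : (j' : ℤ) - j ≤ -1 := by omega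
      have := mul_le_mul_of_nonneg_right h1 (show (0:ℤ) ≤ (n:ℤ)+1 by positivity)
      rw [heq] at this; linarith
    · exact h0
    · have h1 : (1 : ℤ) ≤ (j' : ℤ) - j := by omega
      have := mul_le_mul_of_nonneg_right h1 (show (0:ℤ) ≤ (n:ℤ)+1 by positivity)
      rw [heq] at this; linarith
  constructor
  · have : (j : ℤ) = j' := by omega
    have : (j : ℕ) = (j' : ℕ) := by exact_mod_cast this
    exact Fin.ext this
  · rw [hj, zero_mul] at heq; linarith

lemma pack_lower (d k : ℕ) (hq : q * (n+1) ≤ m) (hm : 2 ≤ m) :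
    q ^ d * betaK (kingsGraph d (fun _ => n)) k ≤ betaK (torusGraph d (fun _ => m)) k := by
  haveI : NeZero m := ⟨by omega⟩
  obtain ⟨S, hS, hcard⟩ := betaK_spec (kingsGraph d (fun _ => n)) k
  set Φ : ((Fin d → Fin q) × (Fin d → Fin n)) → (Fin d → ZMod m) :=
    fun p i => (((p.1 i : ℕ) * (n+1) + (p.2 i : ℕ) : ℕ) : ZMod m) with hΦ
  have hinj : Function.Injective Φ := by
    rintro ⟨j, x⟩ ⟨j', x'⟩ hpe
    have key : ∀ i, j i = j' i ∧ x i = x' i := by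
      intro i
      have h := congrFun hpe i
      have hdiff : (((j' i : ℕ) * (n+1) + (x' i : ℕ) : ℕ) : ZMod m)
          - (((j i : ℕ) * (n+1) + (x i : ℕ) : ℕ) : ZMod m) = ((0 : ℤ) : ZMod m) := by
        simp only [hΦ] at h
        rw [h]; simp
      obtain ⟨h1, h2⟩ := pack_key hq (by norm_num) hdiff
      refine ⟨h1, Fin.ext ?_⟩
      have : (x i : ℤ) = x' i := by omega
      exact_mod_cast this
    ext i
    · exact congrArg Fin.val (key i).1
    · exact congrArg Fin.val (key i).2
  set T : Set (Fin d → ZMod m) := Φ '' (Set.univ ×ˢ S) with hT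
  have hdep : IsKDependent (torusGraph d (fun _ => m)) k T := by
    rintro v ⟨⟨j, x⟩, ⟨-, hx⟩, rfl⟩
    have hsub : T ∩ (torusGraph d (fun _ => m)).neighborSet (Φ (j, x))
        ⊆ (fun y => Φ (j, y)) '' (S ∩ (kingsGraph d (fun _ => n)).neighborSet x) := by
      rintro w ⟨⟨⟨j', x'⟩, ⟨-, hx'⟩, rfl⟩, hadj⟩
      obtain ⟨hne, hdiffs⟩ := hadj
      have key : ∀ i, j' i = j i ∧ |(x' i : ℤ) - (x i : ℤ)| ≤ 1 := by
        intro i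
        have hd := hdiffs i
        have : ∃ c : ℤ, |c| ≤ 1 ∧ Φ (j', x') i - Φ (j, x) i = ((c : ℤ) : ZMod m) := by
          rcases hd with h | h | h
          · exact ⟨-1, by norm_num, by rw [h]; norm_num⟩
          · exact ⟨0, by norm_num, by rw [h]; norm_num⟩
          · exact ⟨1, by norm_num, by rw [h]; norm_num⟩
        obtain ⟨c, hc, hcd⟩ := this
        obtain ⟨h1, h2⟩ := pack_key hq hc hcd
        exact ⟨h1.symm, by rw [h2]; exact hc⟩
      have hjj : j' = j := funext fun i => (key i).1
      refine ⟨x', ⟨hx', ?_, fun i => (key i).2⟩, by rw [hjj]⟩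
      -- x' ≠ x
      intro hxx
      exact hne (by rw [hjj, hxx])
    calc (T ∩ (torusGraph d (fun _ => m)).neighborSet (Φ (j, x))).ncard
        ≤ ((fun y => Φ (j, y)) '' (S ∩ (kingsGraph d (fun _ => n)).neighborSet x)).ncard :=
          Set.ncard_le_ncard hsub (Set.toFinite _)
      _ = (S ∩ (kingsGraph d (fun _ => n)).neighborSet x).ncard :=
          Set.ncard_image_of_injective _ (fun a b hab => by
            have := hinj (a₁ := (j, a)) (a₂ := (j, b)) hab
            exact (Prod.mk.injEq _ _ _ _).mp this |>.2)
      _ ≤ k := hS x hx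
  have hcardT : T.ncard = q ^ d * S.ncard := by
    rw [hT, Set.ncard_image_of_injective _ hinj]
    rw [← Nat.card_coe_set_eq]
    have e : ↥((Set.univ : Set (Fin d → Fin q)) ×ˢ S) ≃ ((Fin d → Fin q) × ↥S) :=
      (Equiv.Set.prod _ _).trans (Equiv.prodCongr (Equiv.Set.univ _) (Equiv.refl _))
    rw [Nat.card_congr e, Nat.card_prod, Nat.card_coe_set_eq]
    congr 1
    simp [Nat.card_eq_fintype_card]
  calc q ^ d * betaK (kingsGraph d (fun _ => n)) k = T.ncard := by rw [hcardT, hcard]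
    _ ≤ betaK (torusGraph d (fun _ => m)) k := le_betaK hdep

end pack

lemma zmod_sub_of_int {m a b : ℕ} {c : ℤ} (h : (b : ℤ) - (a : ℤ) = c) :
    (b : ZMod m) - (a : ZMod m) = (c : ZMod m) := by
  have : ((c : ℤ) : ZMod m) = (((b : ℤ) - a : ℤ) : ZMod m) := by rw [h]
  push_cast at this
  rw [this]

lemma torus_upper (d k m : ℕ) (hm : 2 ≤ m) :
    betaK (torusGraph d (fun _ => m)) k
      ≤ betaK (kingsGraph d (fun _ => (m-1))) k + (m ^ d - (m-1) ^ d) := by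
  haveI : NeZero m := ⟨by omega⟩
  obtain ⟨S, hS, hcard⟩ := betaK_spec (torusGraph d (fun _ => m)) k
  set f : (Fin d → Fin (m-1)) → (Fin d → ZMod m) :=
    fun x i => ((x i : ℕ) : ZMod m) with hf
  have hinj : Function.Injective f := by
    intro x y hxy
    funext i
    have h := congrFun hxy i
    have hx : ((x i : ℕ) : ZMod m).val = (x i : ℕ) := ZMod.val_cast_of_lt (by omega)
    have hy : ((y i : ℕ) : ZMod m).val = (y i : ℕ) := ZMod.val_cast_of_lt (by omega)
    refine Fin.ext ?_
    rw [← hx, ← hy]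
    exact congrArg ZMod.val h
  have hadj : ∀ u v, (kingsGraph d (fun _ => (m-1))).Adj u v →
      (torusGraph d (fun _ => m)).Adj (f u) (f v) := by
    rintro u v ⟨hne, hd⟩
    refine ⟨fun h => hne (hinj h), fun i => ?_⟩
    have := hd i
    have hc : (v i : ℤ) - (u i : ℤ) = -1 ∨ (v i : ℤ) - (u i : ℤ) = 0 ∨
        (v i : ℤ) - (u i : ℤ) = 1 := by rw [abs_le] at this; omega
    rcases hc with h | h | h
    · left
      show ((v i : ℕ) : ZMod m) - ((u i : ℕ) : ZMod m) = -1
      rw [zmod_sub_of_int (m := m) h]; push_cast; ring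
    · right; left
      show ((v i : ℕ) : ZMod m) - ((u i : ℕ) : ZMod m) = 0
      rw [zmod_sub_of_int (m := m) h]; push_cast; ring
    · right; right
      show ((v i : ℕ) : ZMod m) - ((u i : ℕ) : ZMod m) = 1
      rw [zmod_sub_of_int (m := m) h]; push_cast; ring
  have hpre : IsKDependent (kingsGraph d (fun _ => (m-1))) k (f ⁻¹' S) :=
    hS.preimage hinj hadj
  have h1 : (f ⁻¹' S).ncard ≤ betaK (kingsGraph d (fun _ => (m-1))) k := le_betaK hpre
  have hsplit : S.ncard = (S ∩ Set.range f).ncard + (S \ Set.range f).ncard := by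
    rw [Set.ncard_inter_add_ncard_diff_eq_ncard S (Set.range f) (Set.toFinite _)]
  have h2 : (S ∩ Set.range f).ncard = (f ⁻¹' S).ncard := by
    rw [show S ∩ Set.range f = f '' (f ⁻¹' S) by rw [Set.image_preimage_eq_inter_range],
      Set.ncard_image_of_injective _ hinj]
  have h3 : (S \ Set.range f).ncard ≤ m ^ d - (m-1) ^ d := by
    have hsub : S \ Set.range f ⊆ Set.univ \ Set.range f := by
      intro x hx; exact ⟨trivial, hx.2⟩
    have := Set.ncard_le_ncard hsub (Set.toFinite _)
    refine this.trans ?_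
    rw [Set.ncard_diff (Set.subset_univ _) (Set.toFinite _)]
    have hu : (Set.univ : Set (Fin d → ZMod m)).ncard = m ^ d := by
      simp [Set.ncard_univ, Nat.card_eq_fintype_card, ZMod.card]
    have hr : (Set.range f).ncard = (m-1) ^ d := by
      rw [← Set.image_univ, Set.ncard_image_of_injective _ hinj]
      simp [Set.ncard_univ, Nat.card_eq_fintype_card]
    omega
  omega

lemma betaK_le_card {V : Type*} [Fintype V] (G : SimpleGraph V) (k : ℕ) :
    betaK G k ≤ Fintype.card V := by
  apply betaK_le
  intro S _
  have := Set.ncard_le_ncard (Set.subset_univ S) Set.finite_univ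
  simpa [Set.ncard_univ, Nat.card_eq_fintype_card] using this

lemma box_card (d n k : ℕ) : betaK (kingsGraph d (fun _ => n)) k ≤ n ^ d := by
  have := betaK_le_card (kingsGraph d (fun _ => n)) k
  simpa using this

lemma lower_est (d k n m : ℕ) (hm : n + 1 ≤ m) (hm2 : 2 ≤ m) :
    (betaK (kingsGraph d (fun _ => n)) k : ℝ) / ((n : ℝ) + 1) ^ d * (((m : ℝ) - n) / m) ^ d
      ≤ (betaK (torusGraph d (fun _ => m)) k : ℝ) / (m : ℝ) ^ d := by
  set q := m / (n+1) with hqdef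
  have hq : q * (n+1) ≤ m := Nat.div_mul_le_self m (n+1)
  have hpack := pack_lower (q := q) (n := n) (m := m) d k hq hm2
  have hmn : m ≤ q * (n+1) + n := by
    have h1 : (n+1) * q + m % (n+1) = m := by rw [hqdef]; exact Nat.div_add_mod m (n+1)
    have h2 : m % (n+1) < n + 1 := Nat.mod_lt m (by omega)
    have h3 : (n+1) * q = q * (n+1) := mul_comm _ _
    linarith
  have hqn : (m : ℝ) - n ≤ (q : ℝ) * ((n : ℝ) + 1) := by
    have : (m : ℝ) ≤ (q : ℝ) * ((n : ℝ) + 1) + n := by exact_mod_cast hmn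
    linarith
  have hmnn : (0 : ℝ) ≤ (m : ℝ) - n := by
    have : (n : ℝ) + 1 ≤ m := by exact_mod_cast hm
    linarith
  have key : ((m : ℝ) - n) ^ d ≤ (q : ℝ) ^ d * ((n : ℝ) + 1) ^ d := by
    rw [← mul_pow]
    exact pow_le_pow_left₀ hmnn hqn d
  have hm0 : (0 : ℝ) < (m : ℝ) ^ d := by positivity
  have hn0 : (0 : ℝ) < ((n : ℝ) + 1) ^ d := by positivity
  calc (betaK (kingsGraph d (fun _ => n)) k : ℝ) / ((n : ℝ) + 1) ^ d * (((m : ℝ) - n) / m) ^ d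
      = (betaK (kingsGraph d (fun _ => n)) k : ℝ) * ((m : ℝ) - n) ^ d
          / (((n : ℝ) + 1) ^ d * (m : ℝ) ^ d) := by
        rw [div_pow]; ring
    _ ≤ (betaK (kingsGraph d (fun _ => n)) k : ℝ) * ((q : ℝ) ^ d * ((n : ℝ) + 1) ^ d)
          / (((n : ℝ) + 1) ^ d * (m : ℝ) ^ d) := by
        gcongr
    _ = ((q ^ d * betaK (kingsGraph d (fun _ => n)) k : ℕ) : ℝ) / (m : ℝ) ^ d := by
        push_cast
        field_simp
    _ ≤ (betaK (torusGraph d (fun _ => m)) k : ℝ) / (m : ℝ) ^ d := by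
        gcongr <;> exact_mod_cast hpack

lemma upper_est (d k m : ℕ) (hm : 2 ≤ m) :
    (betaK (torusGraph d (fun _ => m)) k : ℝ) / (m : ℝ) ^ d
      ≤ (betaK (kingsGraph d (fun _ => (m-1))) k : ℝ) / (m : ℝ) ^ d
        + (1 - (((m : ℝ) - 1) / m) ^ d) := by
  have h := torus_upper d k m hm
  have hple : (m-1) ^ d ≤ m ^ d := Nat.pow_le_pow_left (by omega) d
  have hcast : ((m ^ d - (m-1) ^ d : ℕ) : ℝ) = (m : ℝ) ^ d - ((m : ℝ) - 1) ^ d := by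
    rw [Nat.cast_sub hple]
    push_cast [Nat.cast_sub (show 1 ≤ m by omega)]
    ring_nf
  have hR : (betaK (torusGraph d (fun _ => m)) k : ℝ)
      ≤ (betaK (kingsGraph d (fun _ => (m-1))) k : ℝ) + ((m : ℝ) ^ d - ((m : ℝ) - 1) ^ d) := by
    have := (Nat.cast_le (α := ℝ)).mpr h
    rw [Nat.cast_add, hcast] at this
    linarith
  have hm0 : (0 : ℝ) < (m : ℝ) ^ d := by positivity
  rw [div_add' _ _ _ (ne_of_gt hm0)]
  · rw [div_le_div_iff₀ hm0 hm0]
    have expand : ((m : ℝ) - 1) / m = ((m:ℝ) - 1) * (m:ℝ)⁻¹ := by ring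
    have hkey : (1 - (((m : ℝ) - 1) / m) ^ d) * (m:ℝ)^d = (m : ℝ) ^ d - ((m : ℝ) - 1) ^ d := by
      rw [div_pow]
      field_simp
    nlinarith [hR, hm0]

/-- the sequence τ_k^(d)(n) = β_k(T^(d)[n])/n^d converges. -/
theorem stmt_1 (d : ℕ) (hd : 1 ≤ d) (k : ℕ) :
    ∃ L : ℝ, Filter.Tendsto
      (fun n : ℕ => (betaK (torusGraph d (fun _ => n)) k : ℝ) / (n : ℝ) ^ d)
      Filter.atTop (nhds L) := by
  set c : ℕ → ℝ := fun n => (betaK (kingsGraph d (fun _ => n)) k : ℝ) / ((n : ℝ) + 1) ^ d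
    with hc
  have hc01 : ∀ n, 0 ≤ c n ∧ c n ≤ 1 := by
    intro n
    have h0 := box_card d n k
    have h2 : (betaK (kingsGraph d (fun _ => n)) k : ℝ) ≤ (n : ℝ) ^ d := by exact_mod_cast h0
    have h3 : (n : ℝ) ^ d ≤ ((n : ℝ) + 1) ^ d := by
      apply pow_le_pow_left₀ (by positivity) (by linarith) d
    refine ⟨by positivity, ?_⟩
    rw [hc, div_le_one (by positivity)]
    linarith
  have hbdd : BddAbove (Set.range c) := ⟨1, by rintro x ⟨n, rfl⟩; exact (hc01 n).2⟩
  have hne : (Set.range c).Nonempty := ⟨c 0, 0, rfl⟩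
  set L := sSup (Set.range c) with hL
  have hub : ∀ n, c n ≤ L := fun n => le_csSup hbdd ⟨n, rfl⟩
  refine ⟨L, Metric.tendsto_atTop.mpr ?_⟩
  intro ε hε
  obtain ⟨x, ⟨n, rfl⟩, hx⟩ := exists_lt_of_lt_csSup hne (show L - ε/2 < L by linarith)
  have hg : Filter.Tendsto (fun m : ℕ => c n * (((m : ℝ) - n) / m) ^ d)
      Filter.atTop (nhds (c n)) := by
    have h1 : Filter.Tendsto (fun m : ℕ => 1 - (n : ℝ) / m) Filter.atTop (nhds 1) := by
      simpa using tendsto_const_nhds.sub (tendsto_const_div_atTop_nhds_zero_nat (n : ℝ))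
    have h2 : Filter.Tendsto (fun m : ℕ => ((m : ℝ) - n) / m) Filter.atTop (nhds 1) := by
      apply h1.congr'
      filter_upwards [Filter.eventually_ge_atTop 1] with m hm
      have hm0 : (m : ℝ) ≠ 0 := by
        have : (1 : ℝ) ≤ m := by exact_mod_cast hm
        linarith
      field_simp
    have h3 := (h2.pow d).const_mul (c n)
    simpa using h3
  have E1 := hg.eventually (lt_mem_nhds (show L - ε < c n by linarith))
  have hu : Filter.Tendsto (fun m : ℕ => 1 - (((m : ℝ) - 1) / m) ^ d)
      Filter.atTop (nhds 0) := by
    have h1 : Filter.Tendsto (fun m : ℕ => 1 - (1 : ℝ) / m) Filter.atTop (nhds 1) := by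
      simpa using tendsto_const_nhds.sub (tendsto_const_div_atTop_nhds_zero_nat (1 : ℝ))
    have h2 : Filter.Tendsto (fun m : ℕ => ((m : ℝ) - 1) / m) Filter.atTop (nhds 1) := by
      apply h1.congr'
      filter_upwards [Filter.eventually_ge_atTop 1] with m hm
      have hm0 : (m : ℝ) ≠ 0 := by
        have : (1 : ℝ) ≤ m := by exact_mod_cast hm
        linarith
      field_simp
    have h3 := (tendsto_const_nhds (x := (1:ℝ)) (f := Filter.atTop (α := ℕ))).sub (h2.pow d)
    simpa using h3
  have E2 := hu.eventually (gt_mem_nhds hε)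
  have E3 := Filter.eventually_ge_atTop (n + 2)
  obtain ⟨N, hN⟩ := Filter.eventually_atTop.mp (E1.and (E2.and E3))
  refine ⟨N, fun m hm => ?_⟩
  obtain ⟨h1, h2, h3⟩ := hN m hm
  have hmn : n + 1 ≤ m := by omega
  have hm2 : 2 ≤ m := by omega
  have low := lower_est d k n m hmn hm2
  have upp := upper_est d k m hm2
  have hcm : (betaK (kingsGraph d (fun _ => (m-1))) k : ℝ) / (m : ℝ) ^ d = c (m-1) := by
    have heq : (((m-1 : ℕ) : ℝ) + 1) = (m : ℝ) := by
      have h1m : (1 : ℕ) ≤ m := by omega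
      push_cast [Nat.cast_sub h1m]
      ring
    rw [hc]
    simp only [heq]
  rw [Real.dist_eq, abs_sub_lt_iff]
  constructor
  · -- τ m - L < ε
    have : (betaK (torusGraph d (fun _ => m)) k : ℝ) / (m : ℝ) ^ d
        ≤ c (m-1) + (1 - (((m : ℝ) - 1) / m) ^ d) := by rw [← hcm]; exact upp
    have := this.trans (by linarith [hub (m-1)] :
      c (m-1) + (1 - (((m : ℝ) - 1) / m) ^ d) ≤ L + (1 - (((m : ℝ) - 1) / m) ^ d))
    linarith
  · -- L - τ m < ε
    have : L - ε < c n * (((m : ℝ) - n) / m) ^ d := h1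
    linarith [low]
end

section
/- For every dimension d ≥ 1, the sequence ρ^(d)(n) = h(K^(d)[n])/n^d converges as n → ∞. -/
open Filter Topology

lemma halfNum_set_nonempty {V : Type*} (G : SimpleGraph V) :
    {m | ∃ S : Set V, IsHalfDependent G S ∧ S.ncard = m}.Nonempty :=
  ⟨0, ∅, fun v hv => absurd hv (Set.notMem_empty v), Set.ncard_empty V⟩

lemma halfNum_set_bddAbove {V : Type*} [Fintype V] (G : SimpleGraph V) :
    BddAbove {m | ∃ S : Set V, IsHalfDependent G S ∧ S.ncard = m} := by
  refine ⟨Fintype.card V, ?_⟩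
  rintro m ⟨S, _, rfl⟩
  calc S.ncard ≤ (Set.univ : Set V).ncard := Set.ncard_le_ncard (Set.subset_univ S) Set.finite_univ
    _ = Fintype.card V := by rw [Set.ncard_univ, Nat.card_eq_fintype_card]

lemma halfNum_le_card {V : Type*} [Fintype V] (G : SimpleGraph V) :
    halfNum G ≤ Fintype.card V := by
  apply csSup_le (halfNum_set_nonempty G)
  rintro m ⟨S, _, rfl⟩
  calc S.ncard ≤ (Set.univ : Set V).ncard := Set.ncard_le_ncard (Set.subset_univ S) Set.finite_univ
    _ = Fintype.card V := by rw [Set.ncard_univ, Nat.card_eq_fintype_card]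

lemma exists_halfDependent_ncard_eq {V : Type*} [Fintype V] (G : SimpleGraph V) :
    ∃ S : Set V, IsHalfDependent G S ∧ S.ncard = halfNum G :=
  Nat.sSup_mem (halfNum_set_nonempty G) (halfNum_set_bddAbove G)

lemma le_halfNum {V : Type*} [Fintype V] (G : SimpleGraph V) {S : Set V}
    (h : IsHalfDependent G S) : S.ncard ≤ halfNum G :=
  le_csSup (halfNum_set_bddAbove G) ⟨S, h, rfl⟩

def embedBlock {d a q n : ℕ} (hq : q * (a+1) ≤ n)
    (b : Fin d → Fin q) (s : ∀ _ : Fin d, Fin a) : ∀ _ : Fin d, Fin n :=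
  fun i => ⟨(b i : ℕ) * (a+1) + (s i : ℕ), by
    have h1 : (s i : ℕ) < a := (s i).isLt
    have h2 : (b i : ℕ) + 1 ≤ q := (b i).isLt
    have h3 : (b i : ℕ) * (a+1) + (s i : ℕ) < ((b i : ℕ) + 1) * (a+1) := by
      rw [add_mul, one_mul]; omega
    exact lt_of_lt_of_le h3 (le_trans (Nat.mul_le_mul_right _ h2) hq)⟩

lemma decomp_unique {a x x' s s' : ℕ} (hs : s < a+1) (hs' : s' < a+1)
    (h : x*(a+1)+s = x'*(a+1)+s') : x = x' ∧ s = s' := by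
  have hx : x = x' := by
    rcases Nat.lt_trichotomy x x' with h1 | h1 | h1
    · exfalso; have h2 : x + 1 ≤ x' := h1; nlinarith
    · exact h1
    · exfalso; have h2 : x' + 1 ≤ x := h1; nlinarith
  subst hx
  exact ⟨rfl, by omega⟩

lemma embedBlock_injective {d a q n : ℕ} (hq : q * (a+1) ≤ n) :
    Function.Injective (fun p : (Fin d → Fin q) × (∀ _ : Fin d, Fin a) =>
      embedBlock hq p.1 p.2) := by
  rintro ⟨b, s⟩ ⟨b', s'⟩ h
  simp only [Prod.mk.injEq]
  have h' : ∀ i, (b i : ℕ) * (a+1) + (s i : ℕ) = (b' i : ℕ) * (a+1) + (s' i : ℕ) := by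
    intro i
    exact congrArg Fin.val (congrFun h i)
  constructor
  · funext i
    exact Fin.ext (decomp_unique (Nat.lt_succ_of_lt (s i).isLt)
      (Nat.lt_succ_of_lt (s' i).isLt) (h' i)).1
  · funext i
    exact Fin.ext (decomp_unique (Nat.lt_succ_of_lt (s i).isLt)
      (Nat.lt_succ_of_lt (s' i).isLt) (h' i)).2

lemma block_step {a : ℤ} (ha : 1 ≤ a) {x x' s s' : ℤ} (hs0 : 0 ≤ s) (hs : s < a)
    (hs0' : 0 ≤ s') (hs' : s' < a)
    (h : |(x'*(a+1)+s') - (x*(a+1)+s)| ≤ 1) : x' = x ∧ |s' - s| ≤ 1 := by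
  rw [abs_le] at h
  have hx : x' = x := by
    rcases lt_trichotomy x' x with h1 | h1 | h1
    · exfalso
      have h2 : 0 ≤ x - x' - 1 := by omega
      nlinarith [mul_nonneg h2 (by linarith : (0:ℤ) ≤ a + 1), h.1]
    · exact h1
    · exfalso
      have h2 : 0 ≤ x' - x - 1 := by omega
      nlinarith [mul_nonneg h2 (by linarith : (0:ℤ) ≤ a + 1), h.2]
  subst hx
  have key : x'*(a+1)+s' - (x'*(a+1)+s) = s' - s := by ring
  rw [key] at h
  exact ⟨rfl, abs_le.mpr h⟩

lemma main_halfdep {d a q n : ℕ} (ha : 1 ≤ a) (hq : q * (a+1) ≤ n)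
    {S : Set (∀ _ : Fin d, Fin a)} (hS : IsHalfDependent (kingsGraph d (fun _ => a)) S) :
    ∃ T : Set (∀ _ : Fin d, Fin n),
      IsHalfDependent (kingsGraph d (fun _ => n)) T ∧ T.ncard = q ^ d * S.ncard := by
  classical
  set Gs := kingsGraph d (fun _ => a) with hGs
  set Gb := kingsGraph d (fun _ => n) with hGb
  set F : (Fin d → Fin q) × (∀ _ : Fin d, Fin a) → (∀ _ : Fin d, Fin n) :=
    fun p => embedBlock hq p.1 p.2 with hF
  refine ⟨F '' (Set.univ ×ˢ S), ?_, ?_⟩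
  · rintro v ⟨⟨b, s⟩, ⟨-, hsS⟩, rfl⟩
    have hsub : (F '' (Set.univ ×ˢ S)) ∩ Gb.neighborSet (F (b, s)) ⊆
        (fun s' => F (b, s')) '' (S ∩ Gs.neighborSet s) := by
      rintro u ⟨⟨⟨b', s'⟩, ⟨-, hs'S⟩, rfl⟩, hadj⟩
      obtain ⟨hne, hcoord⟩ := hadj
      have key : ∀ i, b' i = b i ∧ |((s' i : ℕ) : ℤ) - ((s i : ℕ) : ℤ)| ≤ 1 := by
        intro i
        have hc : |(((b' i : ℕ) * (a+1) + (s' i : ℕ) : ℕ) : ℤ) -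
            (((b i : ℕ) * (a+1) + (s i : ℕ) : ℕ) : ℤ)| ≤ 1 := hcoord i
        push_cast at hc
        have := block_step (by exact_mod_cast ha) (by positivity)
          (by exact_mod_cast (s i).isLt) (by positivity) (by exact_mod_cast (s' i).isLt) hc
        exact ⟨Fin.ext (by exact_mod_cast this.1), this.2⟩
      have hb : b' = b := funext fun i => (key i).1
      subst hb
      have hss' : s ≠ s' := by
        rintro rfl; exact hne rfl
      exact ⟨s', ⟨hs'S, hss', fun i => (key i).2⟩, rfl⟩
    have hinj : Function.Injective (fun s' => F (b, s')) := by
      intro x y hxy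
      have := embedBlock_injective hq (a := a) hxy
      exact (Prod.mk.injEq _ _ _ _).mp this |>.2
    have hmap : ∀ s' ∈ Gs.neighborSet s, F (b, s') ∈ Gb.neighborSet (F (b, s)) := by
      rintro s' ⟨hne, hcoord⟩
      refine ⟨fun h => hne (hinj h), fun i => ?_⟩
      have : (((b i : ℕ) * (a+1) + (s' i : ℕ) : ℕ) : ℤ) -
          (((b i : ℕ) * (a+1) + (s i : ℕ) : ℕ) : ℤ) = ((s' i : ℕ) : ℤ) - ((s i : ℕ) : ℤ) := by
        push_cast; ring
      show |(((b i : ℕ) * (a+1) + (s' i : ℕ) : ℕ) : ℤ) -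
          (((b i : ℕ) * (a+1) + (s i : ℕ) : ℕ) : ℤ)| ≤ 1
      rw [this]; exact hcoord i
    have hB : (Gs.neighborSet s).ncard ≤ (Gb.neighborSet (F (b, s))).ncard :=
      Set.ncard_le_ncard_of_injOn _ hmap hinj.injOn (Set.toFinite _)
    have hA : ((F '' (Set.univ ×ˢ S)) ∩ Gb.neighborSet (F (b, s))).ncard ≤
        (S ∩ Gs.neighborSet s).ncard := by
      calc ((F '' (Set.univ ×ˢ S)) ∩ Gb.neighborSet (F (b, s))).ncard
          ≤ ((fun s' => F (b, s')) '' (S ∩ Gs.neighborSet s)).ncard :=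
            Set.ncard_le_ncard hsub (Set.toFinite _)
        _ = (S ∩ Gs.neighborSet s).ncard := Set.ncard_image_of_injective _ hinj
    calc 2 * ((F '' (Set.univ ×ˢ S)) ∩ Gb.neighborSet (F (b, s))).ncard
        ≤ 2 * (S ∩ Gs.neighborSet s).ncard := by omega
      _ ≤ (Gs.neighborSet s).ncard := hS s hsS
      _ ≤ (Gb.neighborSet (F (b, s))).ncard := hB
  · rw [Set.ncard_image_of_injective _ (embedBlock_injective hq)]
    rw [← Nat.card_coe_set_eq, Nat.card_congr (Equiv.Set.prod _ _), Nat.card_prod]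
    rw [Nat.card_coe_set_eq, Nat.card_coe_set_eq, Set.ncard_univ,
      Nat.card_eq_fintype_card]
    congr 1
    simp [Fintype.card_pi]

-- derived facts about hseq
lemma hseq_le (d m : ℕ) : halfNum (kingsGraph d (fun _ => m)) ≤ m ^ d := by
  have := halfNum_le_card (kingsGraph d (fun _ => m))
  simpa [Fintype.card_pi] using this

lemma hseq_zero (d : ℕ) (hd : 1 ≤ d) : halfNum (kingsGraph d (fun _ => 0)) = 0 := by
  have h := hseq_le d 0
  rw [zero_pow (by omega : d ≠ 0)] at h
  omega

lemma hseq_lower {d a n : ℕ} (ha : 1 ≤ a) :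
    (n / (a+1)) ^ d * halfNum (kingsGraph d (fun _ => a)) ≤
      halfNum (kingsGraph d (fun _ => n)) := by
  obtain ⟨S, hS, hcard⟩ := exists_halfDependent_ncard_eq (kingsGraph d (fun _ => a))
  obtain ⟨T, hT, hTcard⟩ := main_halfdep ha (Nat.div_mul_le_self n (a+1)) hS
  have := le_halfNum _ hT
  rw [hTcard, hcard] at this
  exact this


/-- the sequence ρ^(d)(n) = h(K^(d)[n])/n^d converges. -/
theorem stmt_3 (d : ℕ) (hd : 1 ≤ d) :
    ∃ L : ℝ, Filter.Tendsto
      (fun n : ℕ => (halfNum (kingsGraph d (fun _ => n)) : ℝ) / (n : ℝ) ^ d)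
      Filter.atTop (nhds L) := by
  set h : ℕ → ℕ := fun m => halfNum (kingsGraph d (fun _ => m)) with hh
  set ρ : ℕ → ℝ := fun n => (h n : ℝ) / (n : ℝ) ^ d with hρ
  set f : ℕ → ℝ := fun m => (h m : ℝ) / ((m : ℝ) + 1) ^ d with hf
  have hbdd : BddAbove (Set.range f) := by
    refine ⟨1, ?_⟩
    rintro x ⟨m, rfl⟩
    have h1 : (h m : ℝ) ≤ ((m : ℝ) + 1) ^ d := by
      have h2 := hseq_le d m
      calc (h m : ℝ) ≤ (m : ℝ) ^ d := by exact_mod_cast h2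
        _ ≤ ((m : ℝ) + 1) ^ d := by gcongr; linarith
    have hp : (0 : ℝ) < ((m : ℝ) + 1) ^ d := by positivity
    exact (div_le_one hp).mpr h1
  set L := sSup (Set.range f) with hL
  refine ⟨L, Metric.tendsto_atTop.mpr ?_⟩
  intro ε hε
  have hfle : ∀ m, f m ≤ L := fun m => le_csSup hbdd ⟨m, rfl⟩
  -- upper bound
  have hu : Tendsto (fun n : ℕ => L * (((n : ℝ) + 1) / n) ^ d) atTop (nhds L) := by
    have t0 : Tendsto (fun n : ℕ => ((n : ℝ) + 1) / n) atTop (nhds 1) := by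
      have t1 : Tendsto (fun n : ℕ => 1 + 1 / (n : ℝ)) atTop (nhds 1) := by
        simpa using (tendsto_const_nhds (x := (1:ℝ))).add tendsto_one_div_atTop_nhds_zero_nat
      apply t1.congr'
      filter_upwards [eventually_ge_atTop 1] with n hn
      have hn0 : (n : ℝ) ≠ 0 := by
        have : (1 : ℝ) ≤ n := by exact_mod_cast hn
        linarith
      field_simp
    have := (t0.pow d).const_mul L
    simpa using this
  have hupper : ∀ᶠ n in atTop, ρ n < L + ε / 2 := by
    filter_upwards [hu.eventually_lt_const (by linarith : L < L + ε / 2),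
      eventually_ge_atTop 1] with n h2 h1
    have hn1 : (1 : ℝ) ≤ (n : ℝ) := by exact_mod_cast h1
    have hnp : (0 : ℝ) < (n : ℝ) ^ d := by positivity
    have h3 : (h n : ℝ) ≤ L * ((n : ℝ) + 1) ^ d := by
      have h4 := hfle n
      rw [hf] at h4
      have h5 : (0 : ℝ) < ((n : ℝ) + 1) ^ d := by positivity
      calc (h n : ℝ) = ((h n : ℝ) / ((n : ℝ) + 1) ^ d) * ((n : ℝ) + 1) ^ d := by
            field_simp
        _ ≤ L * ((n : ℝ) + 1) ^ d := by gcongr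
    calc ρ n = (h n : ℝ) / (n : ℝ) ^ d := rfl
      _ ≤ (L * ((n : ℝ) + 1) ^ d) / (n : ℝ) ^ d := by gcongr
      _ = L * (((n : ℝ) + 1) / n) ^ d := by rw [div_pow]; ring
      _ < L + ε / 2 := h2
  -- lower bound
  have hρ0 : ∀ n, 0 ≤ ρ n := fun n => by positivity
  obtain ⟨x, ⟨a, rfl⟩, hxa⟩ := exists_lt_of_lt_csSup (Set.range_nonempty f)
    (by linarith : L - ε / 2 < L)
  have hlower : ∀ᶠ n in atTop, L - ε / 2 < ρ n := by
    by_cases hza : h a = 0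
    · have hfa0 : f a = 0 := by simp [hf, hza]
      rw [hfa0] at hxa
      filter_upwards [eventually_ge_atTop 0] with n _
      exact lt_of_lt_of_le hxa (hρ0 n)
    · have ha1 : 1 ≤ a := by
        by_contra hcon
        have : a = 0 := by omega
        subst this
        exact hza (hseq_zero d hd)
    -- the comparison sequence
      set w : ℕ → ℝ := fun n => (h a : ℝ) * (((n : ℝ) - a) / (((a : ℝ) + 1) * n)) ^ d with hw
      have hwlim : Tendsto w atTop (nhds (f a)) := by
        have t2 : Tendsto (fun n : ℕ => ((n : ℝ) - a) / (((a : ℝ) + 1) * n)) atTop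
            (nhds (1 / ((a : ℝ) + 1))) := by
          have t4 : Tendsto (fun n : ℕ => 1 - (a : ℝ) * (1 / (n : ℝ))) atTop (nhds 1) := by
            simpa using tendsto_const_nhds.sub
              (tendsto_one_div_atTop_nhds_zero_nat.const_mul (a : ℝ))
          have t3 := t4.mul_const (1 / ((a : ℝ) + 1))
          rw [one_mul] at t3
          apply t3.congr'
          filter_upwards [eventually_ge_atTop 1] with n hn
          have hn0 : (n : ℝ) ≠ 0 := by
            have : (1 : ℝ) ≤ n := by exact_mod_cast hn
            linarith
          have ha0 : ((a : ℝ) + 1) ≠ 0 := by positivity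
          have h1 : 1 - (a : ℝ) * (1 / n) = ((n : ℝ) - a) / n := by
            field_simp
          show (1 - (a : ℝ) * (1 / n)) * (1 / ((a : ℝ) + 1)) = ((n : ℝ) - a) / (((a : ℝ) + 1) * n)
          rw [h1, div_mul_div_comm, mul_one, mul_comm (n : ℝ) ((a : ℝ) + 1)]
        have t5 := (t2.pow d).const_mul (h a : ℝ)
        have : f a = (h a : ℝ) * (1 / ((a : ℝ) + 1)) ^ d := by
          rw [hf, div_pow, one_pow]
          ring
        rw [this]
        exact t5
      have hl2 : ∀ n : ℕ, a + 1 ≤ n → w n ≤ ρ n := by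
        intro n hn
        set q := n / (a + 1) with hqdef
        have hkey : q ^ d * h a ≤ h n := hseq_lower ha1
        have hq1 : ((n : ℝ) - a) / ((a : ℝ) + 1) ≤ (q : ℝ) := by
          have hmod : n % (a + 1) ≤ a := Nat.lt_succ_iff.mp (Nat.mod_lt _ (by omega))
          have hdm : q * (a + 1) + n % (a + 1) = n := by
            rw [mul_comm]; exact Nat.div_add_mod n (a + 1)
          rw [div_le_iff₀ (by positivity)]
          have h6 : (q : ℝ) * ((a : ℝ) + 1) + ((n % (a + 1) : ℕ) : ℝ) = n := by
            exact_mod_cast hdm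
          have h7 : ((n % (a + 1) : ℕ) : ℝ) ≤ (a : ℝ) := by exact_mod_cast hmod
          linarith
        have hna : (a : ℝ) ≤ (n : ℝ) := by exact_mod_cast (by omega : a ≤ n)
        have hnn : (0 : ℝ) ≤ ((n : ℝ) - a) / ((a : ℝ) + 1) :=
          div_nonneg (by linarith) (by positivity)
        have hpow : (((n : ℝ) - a) / ((a : ℝ) + 1)) ^ d ≤ (q : ℝ) ^ d := by gcongr
        have hn1 : (1 : ℝ) ≤ (n : ℝ) := by exact_mod_cast (by omega : 1 ≤ n)
        have hnpos : (0 : ℝ) < (n : ℝ) ^ d := by positivity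
        have hwn : w n = (h a : ℝ) * (((n : ℝ) - a) / ((a : ℝ) + 1)) ^ d / (n : ℝ) ^ d := by
          show (h a : ℝ) * (((n : ℝ) - a) / (((a : ℝ) + 1) * n)) ^ d = _
          have heq : ((n : ℝ) - a) / (((a : ℝ) + 1) * n) = (((n : ℝ) - a) / ((a : ℝ) + 1)) / n := by
            rw [div_div]
          rw [heq, div_pow]
          ring
        rw [hwn]
        have hnum : (h a : ℝ) * (((n : ℝ) - a) / ((a : ℝ) + 1)) ^ d ≤ (h n : ℝ) := by
          calc (h a : ℝ) * (((n : ℝ) - a) / ((a : ℝ) + 1)) ^ d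
              ≤ (h a : ℝ) * (q : ℝ) ^ d := by gcongr
            _ = ((q ^ d * h a : ℕ) : ℝ) := by push_cast; ring
            _ ≤ (h n : ℝ) := by exact_mod_cast hkey
        calc (h a : ℝ) * (((n : ℝ) - a) / ((a : ℝ) + 1)) ^ d / (n : ℝ) ^ d
            ≤ (h n : ℝ) / (n : ℝ) ^ d := by gcongr
          _ = ρ n := rfl
      have hev : ∀ᶠ n in atTop, L - ε / 2 < w n := hwlim.eventually_const_lt hxa
      filter_upwards [hev, eventually_ge_atTop (a + 1)] with n h8 h9
      exact lt_of_lt_of_le h8 (hl2 n h9)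
  obtain ⟨N, hN⟩ := eventually_atTop.mp (hupper.and hlower)
  refine ⟨N, fun n hn => ?_⟩
  rw [Real.dist_eq, abs_lt]
  obtain ⟨h10, h11⟩ := hN n hn
  constructor <;> linarith
end

section
/- The limit inferior as n → ∞ of β_4(T^(2)[n])/n² is at least 3/5; that is, the 4-dependent limiting density τ_4^(2) for two-dimensional toroidal kings graphs is at least 3/5. -/
open Filter Topology

lemma zval_add_one {n : ℕ} (hn : 1 < n) (a : ZMod n) : (a + 1).val = (a.val + 1) % n := by
  haveI : NeZero n := ⟨by omega⟩
  haveI : Fact (1 < n) := ⟨hn⟩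
  rw [ZMod.val_add, ZMod.val_one]

lemma zval_sub_one {n : ℕ} (hn : 1 < n) (a : ZMod n) :
    (a - 1).val = (a.val + (n - 1)) % n := by
  haveI : NeZero n := ⟨by omega⟩
  have h : a - 1 = a + (-1) := by ring
  rw [h, ZMod.val_add]
  congr 1
  obtain ⟨m, rfl⟩ : ∃ m, n = m + 1 := ⟨n - 1, by omega⟩
  rw [ZMod.val_neg_one]; omega

lemma mod_pred {n x m' : ℕ} (hn : 1 < n) (hx : x < n) (h : (x + (n-1)) % n < m') (hm : m' < n) :
    1 ≤ x ∧ (x + (n-1)) % n = x - 1 := by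
  rcases Nat.eq_zero_or_pos x with rfl | hx1
  · rw [Nat.zero_add, Nat.mod_eq_of_lt (by omega)] at h
    omega
  · refine ⟨hx1, ?_⟩
    have hxx : x + (n-1) = n + (x-1) := by omega
    rw [hxx, Nat.add_mod_left, Nat.mod_eq_of_lt (by omega)]

/-- One-coordinate analysis of a torus step. -/
lemma coord_step {n m : ℕ} (hn : 1 < n) (hm : m < n) (a b : ZMod n)
    (h : b - a = -1 ∨ b - a = 0 ∨ b - a = 1) (ha : a.val < m) (hb : b.val < m) :
    ∃ e : ℤ, e.natAbs ≤ 1 ∧ b = a + (e : ZMod n) ∧ (b.val : ℤ) = (a.val : ℤ) + e := by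
  haveI : NeZero n := ⟨by omega⟩
  rcases h with h | h | h
  · refine ⟨-1, by decide, ?_, ?_⟩
    · have : b = a + (-1) := by linear_combination h
      simpa using this
    · have hb1 : b = a - 1 := by linear_combination h
      rw [hb1, zval_sub_one hn] at hb ⊢
      obtain ⟨h1, h2⟩ := mod_pred hn (ZMod.val_lt a) hb hm
      rw [h2]; omega
  · refine ⟨0, by decide, ?_, ?_⟩
    · have : b = a := by linear_combination h
      simpa using this
    · have : b = a := by linear_combination h
      rw [this]; ring
  · refine ⟨1, by decide, ?_, ?_⟩
    · have : b = a + 1 := by linear_combination h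
      simpa using this
    · have hb1 : b = a + 1 := by linear_combination h
      rw [hb1, zval_add_one hn, Nat.mod_eq_of_lt (by omega)]
      push_cast; ring

lemma betaK_lower {n : ℕ} (hn : 2 ≤ n) :
    15 * ((n-1)/5)^2 ≤ betaK (torusGraph 2 (fun _ => n)) 4 := by
  haveI : NeZero n := ⟨by omega⟩
  have hn1 : 1 < n := hn
  set k := (n-1)/5 with hk
  set m := 5*k with hm
  have hmn : m < n := by omega
  set G := torusGraph 2 (fun _ => n) with hG
  set S : Set (Fin 2 → ZMod n) :=
    {v | (v 0).val < m ∧ (v 1).val < m ∧ ((v 0).val + 2*(v 1).val) % 5 < 3} with hS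
  -- 4-dependence
  have hdep : IsKDependent G 4 S := by
    intro v hv
    obtain ⟨hx, hy, ht⟩ := hv
    set x := (v 0).val with hxd
    set y := (v 1).val with hyd
    set F : ℤ × ℤ → (Fin 2 → ZMod n) :=
      fun p => fun i => if i = 0 then v 0 + (p.1 : ZMod n) else v 1 + (p.2 : ZMod n) with hF
    -- uniform description of neighbors in S
    have key : ∀ u ∈ S ∩ G.neighborSet v, ∃ e0 e1 : ℤ,
        e0.natAbs ≤ 1 ∧ e1.natAbs ≤ 1 ∧ ¬(e0 = 0 ∧ e1 = 0) ∧ u = F (e0, e1) ∧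
        (((x : ℤ) + e0) + 2*((y : ℤ) + e1)) % 5 < 3 := by
      rintro u ⟨⟨hu0, hu1, hu5⟩, hadj⟩
      have hadj' : G.Adj v u := hadj
      obtain ⟨hne, hd⟩ := hadj'
      obtain ⟨e0, he0, hb0, hv0⟩ := coord_step hn1 hmn (v 0) (u 0) (hd 0) hx hu0
      obtain ⟨e1, he1, hb1, hv1⟩ := coord_step hn1 hmn (v 1) (u 1) (hd 1) hy hu1
      refine ⟨e0, e1, he0, he1, ?_, ?_, ?_⟩
      · rintro ⟨rfl, rfl⟩
        apply hne
        funext i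
        fin_cases i
        · simpa using hb0.symm
        · simpa using hb1.symm
      · funext i
        fin_cases i
        · simpa [hF] using hb0
        · simpa [hF] using hb1
      · have hz : (((u 0).val : ℤ) + 2*((u 1).val : ℤ)) % 5 < 3 := by
          zify at hu5; exact_mod_cast hu5
        rw [hv0, hv1] at hz
        omega
    have hbound : ∀ P : Finset (ℤ × ℤ), P.card ≤ 4 →
        (S ∩ G.neighborSet v ⊆ F '' (↑P : Set (ℤ × ℤ))) →
        (S ∩ G.neighborSet v).ncard ≤ 4 := by
      intro P hP hsub
      calc (S ∩ G.neighborSet v).ncard ≤ (F '' (↑P : Set (ℤ × ℤ))).ncard :=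
            Set.ncard_le_ncard hsub (Set.toFinite _)
        _ ≤ (↑P : Set (ℤ × ℤ)).ncard := Set.ncard_image_le (Set.toFinite _)
        _ = P.card := Set.ncard_coe_finset _
        _ ≤ 4 := hP
    have htz : ((x:ℤ) + 2*(y:ℤ)) % 5 = 0 ∨ ((x:ℤ) + 2*(y:ℤ)) % 5 = 1 ∨
        ((x:ℤ) + 2*(y:ℤ)) % 5 = 2 := by
      zify at ht; omega
    rcases htz with h3 | h3 | h3
    · refine hbound {(-1,-1),(1,0),(-1,1),(0,1)} (by decide) ?_
      intro u hu
      obtain ⟨e0, e1, he0, he1, hnz, hequ, h5⟩ := key u hu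
      refine ⟨(e0, e1), ?_, hequ.symm⟩
      simp only [Finset.coe_insert, Set.mem_insert_iff, Finset.coe_singleton,
        Set.mem_singleton_iff, Prod.mk.injEq]
      omega
    · refine hbound {(1,-1),(-1,0),(1,0),(-1,1)} (by decide) ?_
      intro u hu
      obtain ⟨e0, e1, he0, he1, hnz, hequ, h5⟩ := key u hu
      refine ⟨(e0, e1), ?_, hequ.symm⟩
      simp only [Finset.coe_insert, Set.mem_insert_iff, Finset.coe_singleton,
        Set.mem_singleton_iff, Prod.mk.injEq]
      omega
    · refine hbound {(0,-1),(1,-1),(-1,0),(1,1)} (by decide) ?_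
      intro u hu
      obtain ⟨e0, e1, he0, he1, hnz, hequ, h5⟩ := key u hu
      refine ⟨(e0, e1), ?_, hequ.symm⟩
      simp only [Finset.coe_insert, Set.mem_insert_iff, Finset.coe_singleton,
        Set.mem_singleton_iff, Prod.mk.injEq]
      omega
  -- cardinality lower bound via an explicit injection
  set φ : Fin m × Fin 3 × Fin k → (Fin 2 → ZMod n) :=
    fun p => ![((5*(p.2.2 : ℕ) + ((p.2.1 : ℕ) + 3*(p.1 : ℕ)) % 5 : ℕ) : ZMod n),
      ((p.1 : ℕ) : ZMod n)] with hφ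
  have hxlt : ∀ (a : Fin m) (b : Fin 3) (c : Fin k),
      5*(c:ℕ) + ((b:ℕ) + 3*(a:ℕ)) % 5 < m := by
    intro a b c
    have hc := c.2
    have h5 := Nat.mod_lt ((b:ℕ) + 3*(a:ℕ)) (by norm_num : 0 < 5)
    omega
  have hval0 : ∀ (a : Fin m) (b : Fin 3) (c : Fin k),
      ((5*(c:ℕ) + ((b:ℕ) + 3*(a:ℕ)) % 5 : ℕ) : ZMod n).val
        = 5*(c:ℕ) + ((b:ℕ) + 3*(a:ℕ)) % 5 :=
    fun a b c => ZMod.val_cast_of_lt ((hxlt a b c).trans hmn)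
  have hval1 : ∀ (a : Fin m), (((a:ℕ) : ZMod n)).val = (a:ℕ) :=
    fun a => ZMod.val_cast_of_lt (a.2.trans hmn)
  have hrange : Set.range φ ⊆ S := by
    rintro _ ⟨⟨a, b, c⟩, rfl⟩
    have hb := b.2
    have ha := a.2
    refine ⟨?_, ?_, ?_⟩ <;>
      simp only [hφ, Matrix.cons_val_zero, Matrix.cons_val_one, Matrix.head_cons,
        hval0 a b c, hval1 a]
    · exact hxlt a b c
    · exact ha
    · omega
  have hinj : Function.Injective φ := by
    rintro ⟨a, b, c⟩ ⟨a', b', c'⟩ h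
    have h0 := congrFun h 0
    have h1 := congrFun h 1
    simp only [hφ, Matrix.cons_val_zero, Matrix.cons_val_one, Matrix.head_cons] at h0 h1
    have ha : (a:ℕ) = (a':ℕ) := by
      have := congrArg ZMod.val h1
      rwa [hval1 a, hval1 a'] at this
    have hx0 : 5*(c:ℕ) + ((b:ℕ) + 3*(a:ℕ)) % 5
        = 5*(c':ℕ) + ((b':ℕ) + 3*(a':ℕ)) % 5 := by
      have := congrArg ZMod.val h0
      rwa [hval0 a b c, hval0 a' b' c'] at this
    have hb := b.2
    have hb' := b'.2
    have hbc : (b:ℕ) = (b':ℕ) ∧ (c:ℕ) = (c':ℕ) := by omega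
    simp only [Prod.mk.injEq]
    exact ⟨Fin.ext ha, Fin.ext hbc.1, Fin.ext hbc.2⟩
  have hsz : m * (3 * k) ≤ S.ncard := by
    have h1 : (Set.range φ).ncard = m * (3*k) := by
      rw [← Set.image_univ, Set.ncard_image_of_injective _ hinj, Set.ncard_univ,
        Nat.card_eq_fintype_card]
      simp
    calc m*(3*k) = (Set.range φ).ncard := h1.symm
      _ ≤ S.ncard := Set.ncard_le_ncard hrange (Set.toFinite _)
  have hbdd : BddAbove {m | ∃ S' : Set (Fin 2 → ZMod n), IsKDependent G 4 S' ∧ S'.ncard = m} := by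
    refine ⟨Fintype.card (Fin 2 → ZMod n), ?_⟩
    rintro _ ⟨S', -, rfl⟩
    have := Set.ncard_le_ncard (Set.subset_univ S') Set.finite_univ
    rwa [Set.ncard_univ, Nat.card_eq_fintype_card] at this
  have hsup : S.ncard ≤ betaK G 4 := le_csSup hbdd ⟨S, hdep, rfl⟩
  calc 15*k^2 = m*(3*k) := by rw [hm]; ring
    _ ≤ S.ncard := hsz
    _ ≤ betaK G 4 := hsup

/-- τ_4^(2) ≥ 3/5. -/
theorem stmt_5 :
    (3 : ℝ)/5 ≤ Filter.liminf
      (fun n : ℕ => (betaK (torusGraph 2 (fun _ => n)) 4 : ℝ) / (n : ℝ) ^ 2)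
      Filter.atTop := by
  have hlim : Tendsto (fun n : ℕ => 3/5 * ((1:ℝ) - 5/(n:ℝ))^2) atTop (𝓝 (3/5)) := by
    have h5 : Tendsto (fun n : ℕ => (5:ℝ)/(n:ℝ)) atTop (𝓝 0) :=
      tendsto_const_div_atTop_nhds_zero_nat 5
    have := (((tendsto_const_nhds (x := (1:ℝ))).sub h5).pow 2).const_mul (3/5 : ℝ)
    simpa using this
  have hle : ∀ᶠ n : ℕ in atTop, 3/5 * ((1:ℝ) - 5/(n:ℝ))^2
      ≤ (betaK (torusGraph 2 (fun _ => n)) 4 : ℝ) / (n : ℝ) ^ 2 := by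
    filter_upwards [eventually_ge_atTop 6] with n hn
    have hb := betaK_lower (n := n) (by omega)
    set k := (n-1)/5 with hk
    have h5k : n ≤ 5*k + 5 := by omega
    have hnR : (0:ℝ) < (n:ℝ) := by positivity
    have hn6 : (6:ℝ) ≤ (n:ℝ) := by exact_mod_cast hn
    have hcn : 3/5 * ((1:ℝ) - 5/(n:ℝ))^2 = (3/5 * ((n:ℝ) - 5)^2) / (n:ℝ)^2 := by
      field_simp
      try ring
    rw [hcn]
    have hnum : 3/5 * ((n:ℝ) - 5)^2 ≤ (betaK (torusGraph 2 (fun _ => n)) 4 : ℝ) := by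
      have h1 : (0:ℝ) ≤ (n:ℝ) - 5 := by linarith
      have h2 : (n:ℝ) - 5 ≤ ((5*k : ℕ) : ℝ) := by
        have : (n:ℝ) ≤ ((5*k + 5 : ℕ) : ℝ) := by exact_mod_cast h5k
        push_cast at this ⊢
        linarith
      have h3 : ((n:ℝ)-5)^2 ≤ ((5*k:ℕ):ℝ)^2 := by
        apply pow_le_pow_left₀ h1 h2
      calc 3/5*((n:ℝ)-5)^2 ≤ 3/5*((5*k:ℕ):ℝ)^2 := by linarith
        _ = ((15*k^2 : ℕ):ℝ) := by push_cast; ring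
        _ ≤ _ := by exact_mod_cast hb
    gcongr
  have hub : ∀ᶠ n : ℕ in atTop,
      (betaK (torusGraph 2 (fun _ => n)) 4 : ℝ) / (n : ℝ) ^ 2 ≤ 1 := by
    filter_upwards [eventually_ge_atTop 1] with n hn
    haveI : NeZero n := ⟨by omega⟩
    have hcard : betaK (torusGraph 2 (fun _ => n)) 4 ≤ n^2 := by
      have hne : (0:ℕ) ∈ {m | ∃ S : Set (Fin 2 → ZMod n),
          IsKDependent (torusGraph 2 (fun _ => n)) 4 S ∧ S.ncard = m} :=
        ⟨∅, fun v hv => absurd hv (Set.notMem_empty v), by simp⟩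
      apply csSup_le ⟨0, hne⟩
      rintro _ ⟨S', -, rfl⟩
      have h := Set.ncard_le_ncard (Set.subset_univ S') Set.finite_univ
      rwa [Set.ncard_univ, Nat.card_eq_fintype_card, Fintype.card_fun, ZMod.card,
        Fintype.card_fin] at h
    have hnR : (0:ℝ) < (n:ℝ)^2 := by positivity
    rw [div_le_one hnR]
    exact_mod_cast Nat.cast_le.mpr hcard
  have hco : IsCoboundedUnder (· ≥ ·) atTop
      (fun n : ℕ => (betaK (torusGraph 2 (fun _ => n)) 4 : ℝ) / (n : ℝ) ^ 2) :=
    isCoboundedUnder_ge_of_eventually_le atTop hub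
  have hbdd : IsBoundedUnder (· ≥ ·) atTop (fun n : ℕ => 3/5 * ((1:ℝ) - 5/(n:ℝ))^2) :=
    hlim.isBoundedUnder_ge
  calc (3:ℝ)/5 = liminf (fun n : ℕ => 3/5 * ((1:ℝ) - 5/(n:ℝ))^2) atTop := hlim.liminf_eq.symm
    _ ≤ _ := liminf_le_liminf hle hbdd hco
end

section
/- Let G be a finite vertex-transitive simple graph, let k ≥ 0 be an integer, fix a vertex v of G, let r denote the degree of v, and let β*_k = β_k(⟨N(v)⟩) be the k-dependence number of the subgraph of G induced by the neighborhood of v. If β*_k − k + r > 0, then β_k(G) ≤ β*_k · |V(G)| / (β*_k − k + r). -/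
open Filter Topology

private lemma ncard_le_betaK {V : Type*} [Fintype V] (G : SimpleGraph V) (k : ℕ)
    {S : Set V} (h : IsKDependent G k S) : S.ncard ≤ betaK G k := by
  apply le_csSup
  · refine ⟨Fintype.card V, ?_⟩
    rintro m ⟨T, -, rfl⟩
    simpa [Set.ncard_univ] using Set.ncard_le_ncard (Set.subset_univ T) (Set.toFinite _)
  · exact ⟨S, h, rfl⟩

private lemma betaK_le_of_iso {V W : Type*} [Fintype W] {G : SimpleGraph V}
    {H : SimpleGraph W} (φ : G ≃g H) (k : ℕ) : betaK G k ≤ betaK H k := by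
  refine csSup_le ⟨0, ∅, fun x hx => absurd hx (Set.notMem_empty x), by simp⟩ ?_
  rintro m ⟨S, hS, rfl⟩
  have himg : ∀ x : V, φ '' (S ∩ G.neighborSet x) = (φ '' S) ∩ H.neighborSet (φ x) := by
    intro x
    ext y
    constructor
    · rintro ⟨z, ⟨hz, hadj⟩, rfl⟩
      exact ⟨⟨z, hz, rfl⟩, φ.map_adj_iff.mpr hadj⟩
    · rintro ⟨⟨z, hz, rfl⟩, hadj⟩
      exact ⟨z, ⟨hz, φ.map_adj_iff.mp hadj⟩, rfl⟩
  have key : IsKDependent H k (φ '' S) := by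
    rintro w ⟨x, hx, rfl⟩
    have hinj : Function.Injective (⇑φ) := fun a b h => φ.toEquiv.injective h
    rw [← himg, Set.ncard_image_of_injective _ hinj]
    exact hS x hx
  have hinj : Function.Injective (⇑φ) := fun a b h => φ.toEquiv.injective h
  have hcard : (φ '' S).ncard = S.ncard := Set.ncard_image_of_injective _ hinj
  exact hcard ▸ ncard_le_betaK H k key

private def induceIso {V : Type*} {G : SimpleGraph V} (f : G ≃g G) (u : V) :
    G.induce (G.neighborSet u) ≃g G.induce (G.neighborSet (f u)) where
  toEquiv := f.mapNeighborSet u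
  map_rel_iff' := by
    intro a b
    show G.Adj (f a) (f b) ↔ G.Adj a b
    exact f.map_adj_iff

/-- the neighborhood bound for k-dependence in vertex-transitive graphs. -/
theorem stmt_7 {V : Type*} [Fintype V] (G : SimpleGraph V)
    (hG : IsVertexTransitive G) (k : ℕ) (v : V)
    (r : ℕ) (hr : r = (G.neighborSet v).ncard)
    (bstar : ℕ) (hb : bstar = betaK (G.induce (G.neighborSet v)) k)
    (hpos : (0 : ℝ) < (bstar : ℝ) - (k : ℝ) + (r : ℝ)) :
    (betaK G k : ℝ) ≤
      (bstar : ℝ) * (Fintype.card V : ℝ) / ((bstar : ℝ) - (k : ℝ) + (r : ℝ)) := by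
  classical
  set n := Fintype.card V with hn
  -- regularity
  have hreg : ∀ u : V, (G.neighborSet u).ncard = r := by
    intro u
    obtain ⟨f, hf⟩ := hG v u
    rw [hr, ← Nat.card_coe_set_eq, ← Nat.card_coe_set_eq]
    exact (Nat.card_congr (hf ▸ f.mapNeighborSet v)).symm
  -- every local betaK is at most bstar
  have hbu : ∀ u : V, betaK (G.induce (G.neighborSet u)) k ≤ bstar := by
    intro u
    obtain ⟨f, hf⟩ := hG u v
    rw [hb]
    exact hf ▸ betaK_le_of_iso (induceIso f u) k
  -- intersection with any neighborhood is at most bstar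
  have hint : ∀ (S : Set V), IsKDependent G k S → ∀ u : V,
      (S ∩ G.neighborSet u).ncard ≤ bstar := by
    intro S hS u
    set T : Set ↥(G.neighborSet u) := Subtype.val ⁻¹' S with hT
    have hTcard : T.ncard = (S ∩ G.neighborSet u).ncard := by
      rw [← Set.ncard_image_of_injective T Subtype.val_injective,
        Set.image_preimage_eq_inter_range, Subtype.range_coe]
    have hTdep : IsKDependent (G.induce (G.neighborSet u)) k T := by
      intro x hx
      have hsub : Subtype.val '' (T ∩ (G.induce (G.neighborSet u)).neighborSet x)
          ⊆ S ∩ G.neighborSet (x : V) := by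
        rintro y ⟨z, ⟨hz1, hz2⟩, rfl⟩
        exact ⟨hz1, hz2⟩
      calc (T ∩ (G.induce (G.neighborSet u)).neighborSet x).ncard
          = (Subtype.val '' (T ∩ (G.induce (G.neighborSet u)).neighborSet x)).ncard :=
            (Set.ncard_image_of_injective _ Subtype.val_injective).symm
        _ ≤ (S ∩ G.neighborSet (x : V)).ncard := Set.ncard_le_ncard hsub (Set.toFinite _)
        _ ≤ k := hS x hx
    calc (S ∩ G.neighborSet u).ncard = T.ncard := hTcard.symm
      _ ≤ betaK (G.induce (G.neighborSet u)) k := ncard_le_betaK _ _ hTdep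
      _ ≤ bstar := hbu u
  -- a maximum k-dependent set exists
  have hset : ∃ S : Set V, IsKDependent G k S ∧ S.ncard = betaK G k := by
    have hne : {m | ∃ S : Set V, IsKDependent G k S ∧ S.ncard = m}.Nonempty :=
      ⟨0, ∅, fun x hx => absurd hx (Set.notMem_empty x), by simp⟩
    have hbdd : BddAbove {m | ∃ S : Set V, IsKDependent G k S ∧ S.ncard = m} := by
      refine ⟨Fintype.card V, ?_⟩
      rintro m ⟨T, -, rfl⟩
      simpa [Set.ncard_univ] using Set.ncard_le_ncard (Set.subset_univ T) (Set.toFinite _)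
    exact Nat.sSup_mem hne hbdd
  obtain ⟨S, hS, hScard⟩ := hset
  set F : Finset V := S.toFinset with hF
  have hFS : ∀ x, x ∈ F ↔ x ∈ S := fun x => Set.mem_toFinset
  have hFcard : F.card = betaK G k := by rw [← hScard, ← Set.ncard_eq_toFinset_card']
  -- counting
  have hcount : ∀ u : V, (S ∩ G.neighborSet u).ncard = (F.filter (fun s => G.Adj u s)).card := by
    intro u
    rw [← Set.ncard_coe_finset]
    congr 1
    ext y
    simp [hF, SimpleGraph.mem_neighborSet, and_comm]
  have hdeg : ∀ s : V, (Finset.univ.filter (fun u => G.Adj u s)).card = r := by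
    intro s
    rw [← hreg s, ← Set.ncard_coe_finset]
    congr 1
    ext u
    simp [SimpleGraph.mem_neighborSet, SimpleGraph.adj_comm]
  have hsum : ∑ u : V, (F.filter (fun s => G.Adj u s)).card = F.card * r := by
    simp_rw [Finset.card_filter]
    rw [Finset.sum_comm]
    rw [Finset.sum_congr rfl (fun s _ => ?_), Finset.sum_const, smul_eq_mul]
    rw [← Finset.card_filter]
    exact hdeg s
  -- split the sum
  have hsplit : F.card * r ≤ F.card * k + (n - F.card) * bstar := by
    rw [← hsum, ← Finset.sum_add_sum_compl F (fun u => (F.filter (fun s => G.Adj u s)).card)]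
    have h1 : ∑ u ∈ F, (F.filter (fun s => G.Adj u s)).card ≤ F.card * k := by
      rw [← smul_eq_mul, ← Finset.sum_const]
      refine Finset.sum_le_sum fun u hu => ?_
      rw [← hcount u]
      exact hS u ((hFS u).mp hu)
    have h2 : ∑ u ∈ Fᶜ, (F.filter (fun s => G.Adj u s)).card ≤ (n - F.card) * bstar := by
      rw [← Finset.card_compl, ← smul_eq_mul, ← Finset.sum_const]
      refine Finset.sum_le_sum fun u _ => ?_
      rw [← hcount u]
      exact hint S hS u
    exact Nat.add_le_add h1 h2
  have hFn : F.card ≤ n := by rw [hn]; exact Finset.card_le_univ F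
  -- real arithmetic
  rw [le_div_iff₀ hpos]
  have hcast : (F.card : ℝ) * r ≤ F.card * k + ((n : ℝ) - F.card) * bstar := by
    have := hsplit
    have h := (Nat.cast_le (α := ℝ)).mpr this
    push_cast [Nat.cast_sub hFn] at h
    linarith
  rw [← hFcard]
  nlinarith [hcast]
end

section
/- For every integer n ≥ 3, every 2-dependent set of vertices in the toroidal kings graph T^(2)[n] = T[n,n] has cardinality at most n²/2. -/
open Filter Topology

theorem aux_main (m : Fin 2 → ℕ) (hm : ∀ i, 3 ≤ m i)
    (S : Set (∀ i : Fin 2, ZMod (m i)))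
    (hS : IsKDependent (torusGraph 2 m) 2 S) :
    2 * S.ncard ≤ m 0 * m 1 := by
  classical
  haveI hnz : ∀ i, NeZero (m i) := fun i => ⟨by have := hm i; omega⟩
  -- basic ZMod facts
  have h10 : ∀ i : Fin 2, (1 : ZMod (m i)) ≠ 0 := by
    intro i h
    have h1 := (ZMod.natCast_eq_zero_iff 1 (m i)).1 (by exact_mod_cast h)
    have := Nat.le_of_dvd one_pos h1
    have := hm i; omega
  have h20 : ∀ i : Fin 2, (2 : ZMod (m i)) ≠ 0 := by
    intro i h
    have h1 := (ZMod.natCast_eq_zero_iff 2 (m i)).1 (by exact_mod_cast h)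
    have := Nat.le_of_dvd (by norm_num) h1
    have := hm i; omega
  have hfin : S.Finite := Set.toFinite S
  set s : Finset (∀ i : Fin 2, ZMod (m i)) := hfin.toFinset with hs
  have hsS : ∀ v, v ∈ s ↔ v ∈ S := fun v => hfin.mem_toFinset
  have hcard : S.ncard = s.card := by
    rw [← hfin.coe_toFinset, Set.ncard_coe_finset]
  -- blocks
  set k : (∀ i : Fin 2, ZMod (m i)) → ℕ := fun b =>
    (s.filter (fun v => ∀ i, v i - b i = 0 ∨ v i - b i = 1)).card with hk
  -- each vertex is in exactly 4 blocks
  have hblocks : ∀ v : (∀ i : Fin 2, ZMod (m i)),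
      (Finset.univ.filter (fun b : (∀ i : Fin 2, ZMod (m i)) => ∀ i, v i - b i = 0 ∨ v i - b i = 1)).card = 4 := by
    intro v
    have he : (Finset.univ.filter (fun b : (∀ i : Fin 2, ZMod (m i)) => ∀ i, v i - b i = 0 ∨ v i - b i = 1))
        = Fintype.piFinset (fun i => ({v i, v i - 1} : Finset (ZMod (m i)))) := by
      ext b
      simp only [Finset.mem_filter, Finset.mem_univ, true_and, Fintype.mem_piFinset,
        Finset.mem_insert, Finset.mem_singleton]
      constructor
      · intro h i
        rcases h i with h | h
        · left; exact (sub_eq_zero.mp h).symm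
        · right; linear_combination -h
      · intro h i
        rcases h i with h | h
        · left; rw [h]; ring
        · right; rw [h]; ring
    rw [he, Fintype.card_piFinset]
    have hc : ∀ i : Fin 2, ({v i, v i - 1} : Finset (ZMod (m i))).card = 2 := by
      intro i
      rw [Finset.card_insert_of_notMem, Finset.card_singleton]
      simp only [Finset.mem_singleton]
      intro h
      apply h10 i
      linear_combination h
    rw [Fin.prod_univ_two, hc 0, hc 1]
    norm_num
  -- sum of block counts = 4 |S|
  have hsum1 : ∑ b : (∀ i : Fin 2, ZMod (m i)), k b = 4 * s.card := by
    simp only [hk, Finset.card_filter]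
    rw [Finset.sum_comm]
    have : ∀ v ∈ s, (∑ b : (∀ i : Fin 2, ZMod (m i)), if (∀ i, v i - b i = 0 ∨ v i - b i = 1) then 1 else 0) = 4 := by
      intro v _
      rw [← Finset.card_filter]
      exact hblocks v
    rw [Finset.sum_congr rfl this, Finset.sum_const, smul_eq_mul, mul_comm]
  -- pair counts
  set C : (∀ i : Fin 2, ZMod (m i)) → (∀ i : Fin 2, ZMod (m i)) → ℕ := fun u v =>
    (Finset.univ.filter (fun b : (∀ i : Fin 2, ZMod (m i)) => (∀ i, u i - b i = 0 ∨ u i - b i = 1) ∧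
      (∀ i, v i - b i = 0 ∨ v i - b i = 1))).card with hC
  -- if u ≠ v share a block then adjacent
  have hadj : ∀ u v : (∀ i : Fin 2, ZMod (m i)), u ≠ v → ∀ b : (∀ i : Fin 2, ZMod (m i)), (∀ i, u i - b i = 0 ∨ u i - b i = 1) →
      (∀ i, v i - b i = 0 ∨ v i - b i = 1) → (torusGraph 2 m).Adj u v := by
    intro u v huv b hu hv
    refine ⟨huv, fun i => ?_⟩
    rcases hu i with h | h <;> rcases hv i with h' | h' <;>
      [skip; skip; skip; skip] <;>
      first
        | (right; left; linear_combination h' - h)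
        | (right; right; linear_combination h' - h)
        | (left; linear_combination h' - h)
  -- key pair bound
  have hCbound : ∀ u v : (∀ i : Fin 2, ZMod (m i)), u ≠ v →
      C u v ≤ 2 * (if (torusGraph 2 m).Adj u v then 1 else 0) := by
    intro u v huv
    by_cases hA : (torusGraph 2 m).Adj u v
    · simp only [hA, if_true, mul_one]
      have he : (Finset.univ.filter (fun b : (∀ i : Fin 2, ZMod (m i)) => (∀ i, u i - b i = 0 ∨ u i - b i = 1) ∧
          (∀ i, v i - b i = 0 ∨ v i - b i = 1)))
          = Fintype.piFinset (fun i => (Finset.univ.filter (fun x : ZMod (m i) =>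
              (u i - x = 0 ∨ u i - x = 1) ∧ (v i - x = 0 ∨ v i - x = 1)))) := by
        ext b
        simp only [Finset.mem_filter, Finset.mem_univ, true_and, Fintype.mem_piFinset,
          ← forall_and]
      rw [hC]
      simp only
      rw [he, Fintype.card_piFinset]
      set c : Fin 2 → ℕ := fun i => (Finset.univ.filter (fun x : ZMod (m i) =>
          (u i - x = 0 ∨ u i - x = 1) ∧ (v i - x = 0 ∨ v i - x = 1))).card with hcdef
      have hcle2 : ∀ i, c i ≤ 2 := by
        intro i
        have hsub : (Finset.univ.filter (fun x : ZMod (m i) =>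
            (u i - x = 0 ∨ u i - x = 1) ∧ (v i - x = 0 ∨ v i - x = 1)))
            ⊆ ({u i, u i - 1} : Finset (ZMod (m i))) := by
          intro x hx
          simp only [Finset.mem_filter, Finset.mem_univ, true_and] at hx
          simp only [Finset.mem_insert, Finset.mem_singleton]
          rcases hx.1 with h | h
          · left; exact (sub_eq_zero.mp h).symm
          · right; linear_combination -h
        calc c i ≤ ({u i, u i - 1} : Finset (ZMod (m i))).card := Finset.card_le_card hsub
          _ ≤ 2 := by
            apply le_trans (Finset.card_insert_le _ _)
            simp
      obtain ⟨i0, hi0⟩ := Function.ne_iff.mp huv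
      have hcle1 : c i0 ≤ 1 := by
        apply Finset.card_le_one.mpr
        intro x hx y hy
        simp only [Finset.mem_filter, Finset.mem_univ, true_and] at hx hy
        have hd := hA.2 i0
        have hne : v i0 - u i0 ≠ 0 := fun h => hi0 (sub_eq_zero.mp h).symm
        rcases hd with hd | hd | hd
        · -- v = u - 1 : forced u - x = 1
          have hx1 : u i0 - x = 1 := by
            rcases hx.1 with h | h
            · exfalso
              rcases hx.2 with h' | h'
              · exact h10 i0 (by linear_combination h - h' + hd)
              · exact h20 i0 (by linear_combination h - h' + hd)
            · exact h
          have hy1 : u i0 - y = 1 := by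
            rcases hy.1 with h | h
            · exfalso
              rcases hy.2 with h' | h'
              · exact h10 i0 (by linear_combination h - h' + hd)
              · exact h20 i0 (by linear_combination h - h' + hd)
            · exact h
          linear_combination hy1 - hx1
        · exact absurd hd hne
        · -- v = u + 1 : forced u - x = 0
          have hx1 : u i0 - x = 0 := by
            rcases hx.1 with h | h
            · exact h
            · exfalso
              rcases hx.2 with h' | h'
              · exact h20 i0 (by linear_combination h' - h - hd)
              · exact h10 i0 (by linear_combination h' - h - hd)
          have hy1 : u i0 - y = 0 := by
            rcases hy.1 with h | h
            · exact h
            · exfalso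
              rcases hy.2 with h' | h'
              · exact h20 i0 (by linear_combination h' - h - hd)
              · exact h10 i0 (by linear_combination h' - h - hd)
          linear_combination hy1 - hx1
      rw [Fin.prod_univ_two]
      fin_cases i0
      · calc c 0 * c 1 ≤ 1 * 2 := Nat.mul_le_mul hcle1 (hcle2 1)
          _ = 2 := by norm_num
      · calc c 0 * c 1 ≤ 2 * 1 := Nat.mul_le_mul (hcle2 0) hcle1
          _ = 2 := by norm_num
    · simp only [hA, if_false, mul_zero, Nat.le_zero, hC]
      rw [Finset.card_eq_zero, Finset.filter_eq_empty_iff]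
      intro b _
      intro hcon
      exact hA (hadj u v huv b hcon.1 hcon.2)
  -- neighbors in S bound
  have hnb : ∀ u ∈ s, (s.filter (fun v => (torusGraph 2 m).Adj u v)).card ≤ 2 := by
    intro u hu
    have := hS u ((hsS u).mp hu)
    have heq : S ∩ (torusGraph 2 m).neighborSet u
        = ↑(s.filter (fun v => (torusGraph 2 m).Adj u v)) := by
      ext v
      simp only [Set.mem_inter_iff, SimpleGraph.mem_neighborSet, Finset.coe_filter,
        Set.mem_setOf_eq, hsS]
    rw [heq, Set.ncard_coe_finset] at this
    exact this
  -- sum of squares bound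
  have hsum2 : ∑ b : (∀ i : Fin 2, ZMod (m i)), (k b)^2 ≤ 8 * s.card := by
    have hsq : ∀ b : (∀ i : Fin 2, ZMod (m i)), (k b)^2 = ∑ u ∈ s, ∑ v ∈ s,
        (if (∀ i, u i - b i = 0 ∨ u i - b i = 1) ∧
            (∀ i, v i - b i = 0 ∨ v i - b i = 1) then 1 else 0) := by
      intro b
      have hkb : k b = ∑ v ∈ s, (if (∀ i, v i - b i = 0 ∨ v i - b i = 1) then 1 else 0) := by
        rw [hk]; exact Finset.card_filter _ _
      rw [hkb, pow_two, Finset.sum_mul_sum]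
      apply Finset.sum_congr rfl
      intro u _
      apply Finset.sum_congr rfl
      intro v _
      by_cases h1 : (∀ i, u i - b i = 0 ∨ u i - b i = 1) <;>
        by_cases h2 : (∀ i, v i - b i = 0 ∨ v i - b i = 1) <;>
        simp [h1, h2]
    calc ∑ b : (∀ i : Fin 2, ZMod (m i)), (k b)^2
        = ∑ u ∈ s, ∑ v ∈ s, C u v := by
          simp only [hsq]
          rw [Finset.sum_comm]
          apply Finset.sum_congr rfl
          intro u _
          rw [Finset.sum_comm]
          apply Finset.sum_congr rfl
          intro v _
          rw [hC]
          simp only [Finset.card_filter]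
      _ ≤ ∑ u ∈ s, (4 + 4) := by
          apply Finset.sum_le_sum
          intro u hu
          rw [← Finset.add_sum_erase s (fun v => C u v) hu]
          have hdiag : C u u = 4 := by
            rw [hC]
            simp only [and_self]
            exact hblocks u
          rw [hdiag]
          apply Nat.add_le_add_left
          calc ∑ v ∈ s.erase u, C u v
              ≤ ∑ v ∈ s.erase u, 2 * (if (torusGraph 2 m).Adj u v then 1 else 0) := by
                apply Finset.sum_le_sum
                intro v hv
                exact hCbound u v (fun h => (Finset.mem_erase.mp hv).1 h.symm)
            _ ≤ ∑ v ∈ s, 2 * (if (torusGraph 2 m).Adj u v then 1 else 0) := by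
                apply Finset.sum_le_sum_of_subset (Finset.erase_subset _ _)
            _ = 2 * (s.filter (fun v => (torusGraph 2 m).Adj u v)).card := by
                rw [Finset.card_filter, Finset.mul_sum]
            _ ≤ 2 * 2 := by
                exact Nat.mul_le_mul_left 2 (hnb u hu)
            _ = 4 := by norm_num
      _ = 8 * s.card := by rw [Finset.sum_const, smul_eq_mul]; ring
  -- Cauchy-Schwarz
  have hN : Fintype.card (∀ i : Fin 2, ZMod (m i)) = m 0 * m 1 := by
    rw [Fintype.card_pi]
    have : ∀ i : Fin 2, Fintype.card (ZMod (m i)) = m i := fun i => ZMod.card (m i)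
    rw [Fin.prod_univ_two, this 0, this 1]
  have hCS := sq_sum_le_card_mul_sum_sq (s := (Finset.univ : Finset (∀ i : Fin 2, ZMod (m i))))
    (f := fun b => (k b : ℤ))
  rw [hcard]
  have e1 : (∑ b : (∀ i : Fin 2, ZMod (m i)), (k b : ℤ)) = 4 * s.card := by
    push_cast [← hsum1]
    norm_cast
  have e2 : (∑ b : (∀ i : Fin 2, ZMod (m i)), (k b : ℤ)^2) ≤ 8 * s.card := by
    have := hsum2
    push_cast
    calc (∑ b : (∀ i : Fin 2, ZMod (m i)), (k b : ℤ)^2) = ((∑ b : (∀ i : Fin 2, ZMod (m i)), (k b)^2 : ℕ) : ℤ) := by push_cast; ring_nf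
      _ ≤ ((8 * s.card : ℕ) : ℤ) := by exact_mod_cast hsum2
      _ = 8 * s.card := by push_cast; ring
  rw [e1, Finset.card_univ, hN] at hCS
  rcases Nat.eq_zero_or_pos s.card with h0 | hpos
  · rw [h0]; positivity
  have hfinal : (16 : ℤ) * s.card ^ 2 ≤ (m 0 * m 1) * (8 * s.card) := by
    calc (16 : ℤ) * s.card ^ 2 = (4 * s.card)^2 := by ring
      _ ≤ (m 0 * m 1 : ℕ) * ∑ b : (∀ i : Fin 2, ZMod (m i)), (k b : ℤ)^2 := hCS
      _ ≤ (m 0 * m 1 : ℕ) * (8 * s.card) := by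
          apply mul_le_mul_of_nonneg_left e2 (by positivity)
      _ = (m 0 * m 1) * (8 * s.card) := by push_cast; ring
  have : (2 : ℤ) * s.card ≤ (m 0 : ℤ) * m 1 := by
    have hp : (0 : ℤ) < s.card := by exact_mod_cast hpos
    nlinarith
  exact_mod_cast this

/-- every 2-dependent set in T[n,n] has at most n²/2 vertices. -/
theorem stmt_8 (n : ℕ) (hn : 3 ≤ n)
    (S : Set (∀ i : Fin 2, ZMod (![n, n] i)))
    (hS : IsKDependent (torusGraph 2 ![n, n]) 2 S) :
    (S.ncard : ℝ) ≤ (n : ℝ) ^ 2 / 2 := by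
  have h := aux_main ![n, n] (by intro i; fin_cases i <;> simpa) S hS
  have h0 : (![n, n] : Fin 2 → ℕ) 0 = n := rfl
  have h1 : (![n, n] : Fin 2 → ℕ) 1 = n := rfl
  rw [h0, h1] at h
  rw [le_div_iff₀ (by norm_num : (0:ℝ) < 2)]
  have : ((2 * S.ncard : ℕ) : ℝ) ≤ ((n * n : ℕ) : ℝ) := by exact_mod_cast h
  push_cast at this
  nlinarith [this]
end

section
/- The sequence β_2(T^(2)[n])/n² converges to 1/2 as n → ∞; that is, the 2-dependent limiting density τ_2^(2) for two-dimensional toroidal kings graphs equals 1/2. -/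
open Filter Topology Finset
set_option linter.unusedSectionVars false

section Basics
variable {n : ℕ}

/-- make a vertex -/
def mkv (a b : ZMod n) : (∀ _ : Fin 2, ZMod n) := ![a, b]

@[simp] lemma mkv_zero (a b : ZMod n) : mkv a b 0 = a := rfl
@[simp] lemma mkv_one (a b : ZMod n) : mkv a b 1 = b := rfl

lemma vertex_eq_iff (u v : ∀ _ : Fin 2, ZMod n) : u = v ↔ u 0 = v 0 ∧ u 1 = v 1 := by
  constructor
  · rintro rfl; exact ⟨rfl, rfl⟩
  · rintro ⟨h0, h1⟩; funext i; fin_cases i <;> assumption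

lemma mkv_inj {a b c d : ZMod n} : mkv a b = mkv c d ↔ a = c ∧ b = d := by
  rw [vertex_eq_iff]; simp

lemma adj_iff (u v : ∀ _ : Fin 2, ZMod n) :
    (torusGraph 2 (fun _ => n)).Adj u v ↔ u ≠ v ∧
      (v 0 - u 0 = -1 ∨ v 0 - u 0 = 0 ∨ v 0 - u 0 = 1) ∧
      (v 1 - u 1 = -1 ∨ v 1 - u 1 = 0 ∨ v 1 - u 1 = 1) := by
  show (u ≠ v ∧ ∀ i, _) ↔ _
  rw [Fin.forall_fin_two]

end Basics

section ZModFacts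
variable {n : ℕ} (hn : 3 ≤ n)
include hn

lemma zmod_two_ne_zero : (2 : ZMod n) ≠ 0 := by
  haveI : NeZero n := ⟨by omega⟩
  have : ((2:ℕ) : ZMod n) ≠ 0 := by
    rw [Ne, ZMod.natCast_eq_zero_iff]
    exact fun h => absurd (Nat.le_of_dvd (by norm_num) h) (by omega)
  simpa using this

lemma zmod_one_ne_zero : (1 : ZMod n) ≠ 0 := by
  haveI : NeZero n := ⟨by omega⟩
  have : ((1:ℕ) : ZMod n) ≠ 0 := by
    rw [Ne, ZMod.natCast_eq_zero_iff]
    exact fun h => absurd (Nat.le_of_dvd (by norm_num) h) (by omega)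
  simpa using this

lemma zmod_neg_one_ne_zero : (-1 : ZMod n) ≠ 0 := by
  simpa [neg_eq_zero] using zmod_one_ne_zero hn

lemma zmod_neg_one_ne_one : (-1 : ZMod n) ≠ 1 := by
  intro h
  apply zmod_two_ne_zero hn
  have := congrArg (· + 1) h
  simp only [neg_add_cancel] at this
  rw [show (2:ZMod n) = 1 + 1 by ring, ← this]

end ZModFacts

section Counting
variable {n : ℕ}

abbrev VV (n : ℕ) := ∀ _ : Fin 2, ZMod n

/-- the graph -/
abbrev Gr (n : ℕ) : SimpleGraph (VV n) := torusGraph 2 (fun _ => n)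

instance : DecidableRel (Gr n).Adj := fun u v =>
  decidable_of_iff' _ (adj_iff u v)

/-- the 8 king-move offsets -/
def D8 (n : ℕ) : Finset (ZMod n × ZMod n) :=
  (({-1, 0, 1} : Finset (ZMod n)) ×ˢ ({-1, 0, 1} : Finset (ZMod n))).erase (0, 0)

lemma adj_iff_offset (u v : VV n) :
    (Gr n).Adj u v ↔ (v 0 - u 0, v 1 - u 1) ∈ D8 n := by
  rw [adj_iff, D8, Finset.mem_erase, Finset.mem_product]
  simp only [Finset.mem_insert, Finset.mem_singleton, Prod.ext_iff, Ne]
  constructor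
  · rintro ⟨hne, h0, h1⟩
    refine ⟨?_, by tauto, by tauto⟩
    rintro ⟨e0, e1⟩
    exact hne ((vertex_eq_iff u v).mpr ⟨(sub_eq_zero.mp e0).symm, (sub_eq_zero.mp e1).symm⟩)
  · rintro ⟨hne, h0, h1⟩
    refine ⟨?_, by tauto, by tauto⟩
    intro h; subst h
    exact hne ⟨by ring, by ring⟩

lemma self_eq_mkv (w : VV n) : w = mkv (w 0) (w 1) := by
  rw [vertex_eq_iff]; simp

variable [NeZero n]

lemma neighborFinset_eq (u : VV n) :
    (Gr n).neighborFinset u = (D8 n).image (fun d => mkv (u 0 + d.1) (u 1 + d.2)) := by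
  ext w
  rw [SimpleGraph.mem_neighborFinset, adj_iff_offset, Finset.mem_image]
  constructor
  · intro h
    exact ⟨(w 0 - u 0, w 1 - u 1), h, by rw [vertex_eq_iff]; constructor <;> simp [mkv]⟩
  · rintro ⟨d, hd, rfl⟩
    simpa using hd

lemma card_D8 (hn : 3 ≤ n) : (D8 n).card = 8 := by
  have h3 : ({-1, 0, 1} : Finset (ZMod n)).card = 3 := by
    rw [Finset.card_insert_of_notMem, Finset.card_insert_of_notMem] <;>
      simp [zmod_neg_one_ne_zero hn, zmod_neg_one_ne_one hn, (zmod_one_ne_zero hn).symm]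
  rw [D8, Finset.card_erase_of_mem, Finset.card_product, h3]
  simp

lemma degree_eq (hn : 3 ≤ n) (u : VV n) : (Gr n).degree u = 8 := by
  rw [SimpleGraph.degree, neighborFinset_eq, Finset.card_image_of_injective, card_D8 hn]
  intro d d' h
  rw [mkv_inj] at h
  exact Prod.ext (add_left_cancel h.1) (add_left_cancel h.2)

end Counting

section Core
variable {n : ℕ} [NeZero n]

lemma sum_count (F : Finset (VV n)) :
    ∑ v : VV n, (F ∩ (Gr n).neighborFinset v).card = ∑ u ∈ F, (Gr n).degree u := by
  have key : ∀ v : VV n, (F ∩ (Gr n).neighborFinset v).card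
      = ∑ u ∈ F, if (Gr n).Adj v u then 1 else 0 := by
    intro v
    rw [← Finset.card_filter]
    congr 1
    ext u
    simp [SimpleGraph.mem_neighborFinset]
  simp only [key]
  rw [Finset.sum_comm]
  refine Finset.sum_congr rfl fun u _ => ?_
  rw [SimpleGraph.degree, SimpleGraph.neighborFinset_eq_filter, Finset.card_filter]
  refine Finset.sum_congr rfl fun v _ => ?_
  congr 1
  simp [SimpleGraph.adj_comm]

/-- the cell at offset `d` from `v` -/
def cell (v : VV n) (d : ZMod n × ZMod n) : VV n := mkv (v 0 + d.1) (v 1 + d.2)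

lemma cell_mem_neighborFinset (v : VV n) {d : ZMod n × ZMod n} (hd : d ∈ D8 n) :
    cell v d ∈ (Gr n).neighborFinset v := by
  rw [neighborFinset_eq]
  exact Finset.mem_image_of_mem _ hd

lemma cell_inj (v : VV n) {d d' : ZMod n × ZMod n} (h : cell v d = cell v d') : d = d' := by
  rw [cell, cell, mkv_inj] at h
  exact Prod.ext (add_left_cancel h.1) (add_left_cancel h.2)

lemma quad (F : Finset (VV n))
    (hdep : ∀ v ∈ F, (F ∩ (Gr n).neighborFinset v).card ≤ 2) (v : VV n)
    (hM : (((Gr n).neighborFinset v) \ F).card ≤ 1)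
    (s : ZMod n × ZMod n) (Q : Finset (VV n)) (hQcard : Q.card = 4)
    (hQsub : Q ⊆ (Gr n).neighborFinset v)
    (hQadj : ∀ w ∈ Q, (Gr n).Adj (cell v s) w)
    (hs : cell v s ∈ F) : False := by
  have h1 : Q \ F ⊆ ((Gr n).neighborFinset v) \ F :=
    Finset.sdiff_subset_sdiff hQsub (le_refl _)
  have h2 : (Q \ F).card ≤ 1 := le_trans (Finset.card_le_card h1) hM
  have h3 : (Q ∩ F).card + (Q \ F).card = Q.card := Finset.card_inter_add_card_sdiff Q F
  have h4 : 3 ≤ (Q ∩ F).card := by omega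
  have h5 : Q ∩ F ⊆ F ∩ (Gr n).neighborFinset (cell v s) := by
    intro w hw
    rw [Finset.mem_inter] at hw ⊢
    exact ⟨hw.2, (SimpleGraph.mem_neighborFinset _ _ _).mpr (hQadj w hw.1)⟩
  have h6 := le_trans h4 (Finset.card_le_card h5)
  have := hdep _ hs
  omega

end Core

section Six
variable {n : ℕ} [NeZero n]

lemma mem_D8_iff (a b : ZMod n) : (a, b) ∈ D8 n ↔
    (¬(a = 0 ∧ b = 0)) ∧ (a = -1 ∨ a = 0 ∨ a = 1) ∧ (b = -1 ∨ b = 0 ∨ b = 1) := by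
  rw [D8, Finset.mem_erase, Finset.mem_product]
  simp only [Finset.mem_insert, Finset.mem_singleton, Prod.ext_iff, ne_eq, not_and]

lemma cell_adj' (v : VV n) (d d' e : ZMod n × ZMod n) (he : e ∈ D8 n)
    (h1 : d'.1 - d.1 = e.1) (h2 : d'.2 - d.2 = e.2) :
    (Gr n).Adj (cell v d) (cell v d') := by
  rw [adj_iff_offset]
  have e1 : cell v d' 0 - cell v d 0 = d'.1 - d.1 := by simp [cell]
  have e2 : cell v d' 1 - cell v d 1 = d'.2 - d.2 := by simp [cell]
  rw [e1, e2, h1, h2]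
  exact he

lemma cell_ne (v : VV n) {d d' : ZMod n × ZMod n} (h : d ≠ d') :
    cell v d ≠ cell v d' := fun e => h (cell_inj v e)

lemma local_six (hn : 5 ≤ n) (F : Finset (VV n))
    (hdep : ∀ v ∈ F, (F ∩ (Gr n).neighborFinset v).card ≤ 2) (v : VV n) :
    (F ∩ (Gr n).neighborFinset v).card ≤ 6 := by
  have hn3 : 3 ≤ n := by omega
  have h10 : (1 : ZMod n) ≠ 0 := zmod_one_ne_zero hn3
  have hm0 : (-1 : ZMod n) ≠ 0 := zmod_neg_one_ne_zero hn3
  have hm1 : (-1 : ZMod n) ≠ 1 := zmod_neg_one_ne_one hn3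
  have h01 : (0 : ZMod n) ≠ 1 := Ne.symm h10
  have h0m : (0 : ZMod n) ≠ -1 := Ne.symm hm0
  have h1m : (1 : ZMod n) ≠ -1 := Ne.symm hm1
  -- memberships of the 8 offsets
  have mpp : ((1 : ZMod n), (1 : ZMod n)) ∈ D8 n :=
    (mem_D8_iff _ _).mpr ⟨fun h => h10 h.1, Or.inr (Or.inr rfl), Or.inr (Or.inr rfl)⟩
  have mp0 : ((1 : ZMod n), (0 : ZMod n)) ∈ D8 n :=
    (mem_D8_iff _ _).mpr ⟨fun h => h10 h.1, Or.inr (Or.inr rfl), Or.inr (Or.inl rfl)⟩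
  have mpm : ((1 : ZMod n), (-1 : ZMod n)) ∈ D8 n :=
    (mem_D8_iff _ _).mpr ⟨fun h => h10 h.1, Or.inr (Or.inr rfl), Or.inl rfl⟩
  have m0p : ((0 : ZMod n), (1 : ZMod n)) ∈ D8 n :=
    (mem_D8_iff _ _).mpr ⟨fun h => h10 h.2, Or.inr (Or.inl rfl), Or.inr (Or.inr rfl)⟩
  have m0m : ((0 : ZMod n), (-1 : ZMod n)) ∈ D8 n :=
    (mem_D8_iff _ _).mpr ⟨fun h => hm0 h.2, Or.inr (Or.inl rfl), Or.inl rfl⟩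
  have mmp : ((-1 : ZMod n), (1 : ZMod n)) ∈ D8 n :=
    (mem_D8_iff _ _).mpr ⟨fun h => hm0 h.1, Or.inl rfl, Or.inr (Or.inr rfl)⟩
  have mm0 : ((-1 : ZMod n), (0 : ZMod n)) ∈ D8 n :=
    (mem_D8_iff _ _).mpr ⟨fun h => hm0 h.1, Or.inl rfl, Or.inr (Or.inl rfl)⟩
  have mmm : ((-1 : ZMod n), (-1 : ZMod n)) ∈ D8 n :=
    (mem_D8_iff _ _).mpr ⟨fun h => hm0 h.1, Or.inl rfl, Or.inl rfl⟩
  by_contra hcon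
  push_neg at hcon
  have hNcard : ((Gr n).neighborFinset v).card = 8 := degree_eq hn3 v
  have hsplit : (((Gr n).neighborFinset v) ∩ F).card + (((Gr n).neighborFinset v) \ F).card
      = ((Gr n).neighborFinset v).card := Finset.card_inter_add_card_sdiff _ F
  rw [Finset.inter_comm] at hsplit
  have hM : (((Gr n).neighborFinset v) \ F).card ≤ 1 := by omega
  have hor : cell v (1, 0) ∈ F ∨ cell v (0, 1) ∈ F := by
    by_contra hno
    push_neg at hno
    have hsub : ({cell v (1, 0), cell v (0, 1)} : Finset (VV n)) ⊆ ((Gr n).neighborFinset v) \ F := by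
      intro w hw
      rw [Finset.mem_insert, Finset.mem_singleton] at hw
      rw [Finset.mem_sdiff]
      rcases hw with rfl | rfl
      · exact ⟨cell_mem_neighborFinset v mp0, hno.1⟩
      · exact ⟨cell_mem_neighborFinset v m0p, hno.2⟩
    have h2 : ({cell v (1, 0), cell v (0, 1)} : Finset (VV n)).card = 2 := by
      rw [Finset.card_insert_of_notMem, Finset.card_singleton]
      simp only [Finset.mem_singleton]
      exact cell_ne v (by simp [Prod.ext_iff, h10, hm0, hm1, h01, h0m, h1m])
    have := Finset.card_le_card hsub
    omega
  rcases hor with hs | hs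
  · refine quad F hdep v hM (1, 0)
      {cell v (1, 1), cell v (1, -1), cell v (0, 1), cell v (0, -1)} ?_ ?_ ?_ hs
    · rw [Finset.card_insert_of_notMem, Finset.card_insert_of_notMem,
        Finset.card_insert_of_notMem, Finset.card_singleton]
      · simp only [Finset.mem_singleton]
        exact cell_ne v (by simp [Prod.ext_iff, h10, hm0, hm1, h01, h0m, h1m])
      · simp only [Finset.mem_insert, Finset.mem_singleton]
        push_neg
        exact ⟨cell_ne v (by simp [Prod.ext_iff, h10, hm0, hm1, h01, h0m, h1m]), cell_ne v (by simp [Prod.ext_iff, h10, hm0, hm1, h01, h0m, h1m])⟩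
      · simp only [Finset.mem_insert, Finset.mem_singleton]
        push_neg
        exact ⟨cell_ne v (by simp [Prod.ext_iff, h10, hm0, hm1, h01, h0m, h1m]), cell_ne v (by simp [Prod.ext_iff, h10, hm0, hm1, h01, h0m, h1m]),
          cell_ne v (by simp [Prod.ext_iff, h10, hm0, hm1, h01, h0m, h1m])⟩
    · intro w hw
      simp only [Finset.mem_insert, Finset.mem_singleton] at hw
      rcases hw with rfl | rfl | rfl | rfl
      · exact cell_mem_neighborFinset v mpp
      · exact cell_mem_neighborFinset v mpm
      · exact cell_mem_neighborFinset v m0p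
      · exact cell_mem_neighborFinset v m0m
    · intro w hw
      simp only [Finset.mem_insert, Finset.mem_singleton] at hw
      rcases hw with rfl | rfl | rfl | rfl
      · exact cell_adj' v _ _ _ m0p (by simp) (by simp)
      · exact cell_adj' v _ _ _ m0m (by simp) (by simp)
      · exact cell_adj' v _ _ _ mmp (by simp [zero_sub]) (by simp)
      · exact cell_adj' v _ _ _ mmm (by simp [zero_sub]) (by simp)
  · refine quad F hdep v hM (0, 1)
      {cell v (1, 1), cell v (-1, 1), cell v (1, 0), cell v (-1, 0)} ?_ ?_ ?_ hs
    · rw [Finset.card_insert_of_notMem, Finset.card_insert_of_notMem,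
        Finset.card_insert_of_notMem, Finset.card_singleton]
      · simp only [Finset.mem_singleton]
        exact cell_ne v (by simp [Prod.ext_iff, h10, hm0, hm1, h01, h0m, h1m])
      · simp only [Finset.mem_insert, Finset.mem_singleton]
        push_neg
        exact ⟨cell_ne v (by simp [Prod.ext_iff, h10, hm0, hm1, h01, h0m, h1m]), cell_ne v (by simp [Prod.ext_iff, h10, hm0, hm1, h01, h0m, h1m])⟩
      · simp only [Finset.mem_insert, Finset.mem_singleton]
        push_neg
        exact ⟨cell_ne v (by simp [Prod.ext_iff, h10, hm0, hm1, h01, h0m, h1m]), cell_ne v (by simp [Prod.ext_iff, h10, hm0, hm1, h01, h0m, h1m]),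
          cell_ne v (by simp [Prod.ext_iff, h10, hm0, hm1, h01, h0m, h1m])⟩
    · intro w hw
      simp only [Finset.mem_insert, Finset.mem_singleton] at hw
      rcases hw with rfl | rfl | rfl | rfl
      · exact cell_mem_neighborFinset v mpp
      · exact cell_mem_neighborFinset v mmp
      · exact cell_mem_neighborFinset v mp0
      · exact cell_mem_neighborFinset v mm0
    · intro w hw
      simp only [Finset.mem_insert, Finset.mem_singleton] at hw
      rcases hw with rfl | rfl | rfl | rfl
      · exact cell_adj' v _ _ _ mp0 (by simp [zero_sub]) (by simp)
      · exact cell_adj' v _ _ _ mm0 (by simp [zero_sub]) (by simp)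
      · exact cell_adj' v _ _ _ mpm (by simp [zero_sub]) (by simp [zero_sub])
      · exact cell_adj' v _ _ _ mmm (by simp [zero_sub]) (by simp [zero_sub])

end Six


section Main
variable {n : ℕ} [NeZero n]

lemma cardVV : Fintype.card (VV n) = n ^ 2 := by
  have h : Fintype.card (Fin 2 → ZMod n) = n ^ 2 := by
    rw [Fintype.card_fun, ZMod.card, Fintype.card_fin]
  exact h

lemma upper_core (hn : 5 ≤ n) (F : Finset (VV n))
    (hdep : ∀ v ∈ F, (F ∩ (Gr n).neighborFinset v).card ≤ 2) :
    2 * F.card ≤ n ^ 2 := by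
  have hn3 : 3 ≤ n := by omega
  have hsum := sum_count F
  have hdeg : ∑ u ∈ F, (Gr n).degree u = 8 * F.card := by
    rw [Finset.sum_congr rfl (fun u _ => degree_eq hn3 u), Finset.sum_const, smul_eq_mul,
      mul_comm]
  have hsplit : ∑ v ∈ F, (F ∩ (Gr n).neighborFinset v).card
      + ∑ v ∈ Fᶜ, (F ∩ (Gr n).neighborFinset v).card
      = ∑ v : VV n, (F ∩ (Gr n).neighborFinset v).card :=
    Finset.sum_add_sum_compl F _
  have h1 : ∑ v ∈ F, (F ∩ (Gr n).neighborFinset v).card ≤ 2 * F.card := by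
    calc ∑ v ∈ F, (F ∩ (Gr n).neighborFinset v).card ≤ ∑ _v ∈ F, 2 :=
          Finset.sum_le_sum hdep
      _ = 2 * F.card := by rw [Finset.sum_const, smul_eq_mul, mul_comm]
  have h2 : ∑ v ∈ Fᶜ, (F ∩ (Gr n).neighborFinset v).card ≤ 6 * Fᶜ.card := by
    calc ∑ v ∈ Fᶜ, (F ∩ (Gr n).neighborFinset v).card ≤ ∑ _v ∈ Fᶜ, 6 :=
          Finset.sum_le_sum (fun v _ => local_six hn F hdep v)
      _ = 6 * Fᶜ.card := by rw [Finset.sum_const, smul_eq_mul, mul_comm]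
  have hcompl : Fᶜ.card = n ^ 2 - F.card := by
    rw [Finset.card_compl, cardVV]
  have hle : F.card ≤ n ^ 2 := by
    rw [← cardVV (n := n)]
    exact Finset.card_le_univ F
  omega

lemma upper_set (hn : 5 ≤ n) (S : Set (VV n)) (hS : IsKDependent (Gr n) 2 S) :
    2 * S.ncard ≤ n ^ 2 := by
  classical
  have hfin : S.Finite := Set.toFinite S
  set F := hfin.toFinset with hF
  have hcard : S.ncard = F.card := by
    rw [hF, Set.ncard_eq_toFinset_card]
  have hkey : ∀ v : VV n, (↑(F ∩ (Gr n).neighborFinset v) : Set (VV n))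
      = S ∩ (Gr n).neighborSet v := by
    intro v
    rw [Finset.coe_inter, hF, Set.Finite.coe_toFinset, SimpleGraph.neighborFinset_def, Set.coe_toFinset]
  have hdep : ∀ v ∈ F, (F ∩ (Gr n).neighborFinset v).card ≤ 2 := by
    intro v hv
    have := hS v (by rwa [hF, Set.Finite.mem_toFinset] at hv)
    rwa [← hkey, Set.ncard_coe_finset] at this
  rw [hcard]
  exact upper_core hn F hdep

end Main

section Lower
variable {n : ℕ} [NeZero n]

lemma cast_inj_of_lt {a b : ℕ} (ha : a < n) (hb : b < n) (h : (a : ZMod n) = b) : a = b := by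
  have := congrArg ZMod.val h
  rwa [ZMod.val_cast_of_lt ha, ZMod.val_cast_of_lt hb] at this

/-- the 2-dependent set: rows `0, 2, …, 2((n-1)/2 - 1)` -/
def lowSet (n : ℕ) [NeZero n] : Finset (VV n) :=
  (Finset.univ : Finset (Fin ((n - 1) / 2) × ZMod n)).image
    (fun p => mkv ((2 * (p.1 : ℕ) : ℕ) : ZMod n) p.2)

lemma lowSet_card (hn : 5 ≤ n) : (lowSet n).card = (n - 1) / 2 * n := by
  rw [lowSet, Finset.card_image_of_injective, Finset.card_univ, Fintype.card_prod,
    Fintype.card_fin, ZMod.card]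
  intro p q h
  rw [mkv_inj] at h
  have h1 : 2 * (p.1 : ℕ) = 2 * (q.1 : ℕ) := by
    refine cast_inj_of_lt ?_ ?_ h.1
    · have := p.1.is_lt; omega
    · have := q.1.is_lt; omega
  exact Prod.ext (Fin.ext (by omega)) h.2

lemma lowSet_dep (hn : 5 ≤ n) : IsKDependent (Gr n) 2 (↑(lowSet n) : Set (VV n)) := by
  rintro v hv
  rw [Finset.mem_coe, lowSet, Finset.mem_image] at hv
  obtain ⟨⟨⟨k, hklt⟩, c⟩, -, rfl⟩ := hv
  simp only at *
  have hsub : (↑(lowSet n) : Set (VV n)) ∩ (Gr n).neighborSet (mkv ((2 * k : ℕ) : ZMod n) c)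
      ⊆ {mkv ((2 * k : ℕ) : ZMod n) (c - 1), mkv ((2 * k : ℕ) : ZMod n) (c + 1)} := by
    rintro w ⟨hw, hadj⟩
    rw [Finset.mem_coe, lowSet, Finset.mem_image] at hw
    obtain ⟨⟨⟨k', hklt'⟩, c'⟩, -, rfl⟩ := hw
    simp only at *
    rw [SimpleGraph.mem_neighborSet, adj_iff] at hadj
    obtain ⟨hne, h0, h1⟩ := hadj
    simp only [mkv_zero, mkv_one] at h0 h1
    have hkk : k' = k := by
      rcases h0 with h | h | h
      · exfalso
        have he : ((2 * k : ℕ) : ZMod n) = ((2 * k' + 1 : ℕ) : ZMod n) := by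
          push_cast at h ⊢
          linear_combination -h
        have := cast_inj_of_lt (by omega) (by omega) he
        omega
      · have he : ((2 * k' : ℕ) : ZMod n) = ((2 * k : ℕ) : ZMod n) := by
          push_cast at h ⊢
          linear_combination h
        have := cast_inj_of_lt (by omega) (by omega) he
        omega
      · exfalso
        have he : ((2 * k' : ℕ) : ZMod n) = ((2 * k + 1 : ℕ) : ZMod n) := by
          push_cast at h ⊢
          linear_combination h
        have := cast_inj_of_lt (by omega) (by omega) he
        omega
    subst hkk
    rcases h1 with h | h | h
    · apply Set.mem_insert_iff.mpr
      left
      rw [vertex_eq_iff]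
      exact ⟨by simp, by simp only [mkv_one]; linear_combination h⟩
    · exfalso
      apply hne
      rw [vertex_eq_iff]
      exact ⟨by simp, by simp only [mkv_one]; linear_combination -h⟩
    · apply Set.mem_insert_iff.mpr
      right
      rw [Set.mem_singleton_iff, vertex_eq_iff]
      exact ⟨by simp, by simp only [mkv_one]; linear_combination h⟩
  have hpairfin : ({mkv ((2 * k : ℕ) : ZMod n) (c - 1), mkv ((2 * k : ℕ) : ZMod n) (c + 1)}
      : Set (VV n)).Finite := (Set.finite_singleton _).insert _
  calc ((↑(lowSet n) : Set (VV n)) ∩ (Gr n).neighborSet (mkv ((2 * k : ℕ) : ZMod n) c)).ncard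
      ≤ ({mkv ((2 * k : ℕ) : ZMod n) (c - 1), mkv ((2 * k : ℕ) : ZMod n) (c + 1)}
        : Set (VV n)).ncard := Set.ncard_le_ncard hsub hpairfin
    _ ≤ 2 := by
        refine le_trans (Set.ncard_insert_le _ _) ?_
        simp [Set.ncard_singleton]

end Lower

section Beta
variable {n : ℕ} [NeZero n]

lemma beta_mem_bound {m : ℕ}
    (hm : m ∈ {m | ∃ S : Set (VV n), IsKDependent (Gr n) 2 S ∧ S.ncard = m}) : m ≤ n ^ 2 := by
  obtain ⟨S, -, rfl⟩ := hm
  calc S.ncard ≤ (Set.univ : Set (VV n)).ncard :=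
        Set.ncard_le_ncard (Set.subset_univ S) Set.finite_univ
    _ = n ^ 2 := by rw [Set.ncard_univ, Nat.card_eq_fintype_card, cardVV]

lemma beta_upper (hn : 5 ≤ n) : 2 * betaK (Gr n) 2 ≤ n ^ 2 := by
  have h1 : betaK (Gr n) 2 ≤ n ^ 2 / 2 := by
    apply csSup_le
    · exact ⟨0, ∅, by intro v hv; simp at hv, by simp⟩
    · rintro m ⟨S, hS, rfl⟩
      have := upper_set hn S hS
      omega
  omega

lemma beta_lower (hn : 5 ≤ n) : (n - 1) / 2 * n ≤ betaK (Gr n) 2 := by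
  have hmem : (n - 1) / 2 * n ∈
      {m | ∃ S : Set (VV n), IsKDependent (Gr n) 2 S ∧ S.ncard = m} :=
    ⟨↑(lowSet n), lowSet_dep hn, by rw [Set.ncard_coe_finset, lowSet_card hn]⟩
  exact le_csSup ⟨n ^ 2, fun m hm => beta_mem_bound hm⟩ hmem

end Beta

/-- τ_2^(2) = 1/2. -/
theorem stmt_9 :
    Filter.Tendsto
      (fun n : ℕ => (betaK (torusGraph 2 (fun _ => n)) 2 : ℝ) / (n : ℝ) ^ 2)
      Filter.atTop (nhds (1/2 : ℝ)) := by

  have hlow : Filter.Tendsto (fun n : ℕ => (1 : ℝ) / 2 - 1 / (n : ℝ)) Filter.atTop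
      (nhds (1/2 : ℝ)) := by
    have := (tendsto_const_nhds (x := (1:ℝ)/2) (f := Filter.atTop (α := ℕ))).sub
      tendsto_one_div_atTop_nhds_zero_nat
    simpa using this
  refine tendsto_of_tendsto_of_tendsto_of_le_of_le' hlow tendsto_const_nhds ?_ ?_
  · filter_upwards [Filter.eventually_ge_atTop 5] with n hn
    haveI : NeZero n := ⟨by omega⟩
    have hlb : (n - 1) / 2 * n ≤ betaK (Gr n) 2 := beta_lower hn
    have hhalf : (n : ℝ) - 2 ≤ 2 * (((n - 1) / 2 : ℕ) : ℝ) := by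
      have h2 : n - 2 ≤ 2 * ((n - 1) / 2) := by omega
      calc (n : ℝ) - 2 ≤ ((n - 2 : ℕ) : ℝ) := by
            push_cast [Nat.cast_sub (by omega : 2 ≤ n)]
            ring_nf
            exact le_refl _
        _ ≤ ((2 * ((n - 1) / 2) : ℕ) : ℝ) := by exact_mod_cast h2
        _ = 2 * (((n - 1) / 2 : ℕ) : ℝ) := by push_cast; ring
    have hB : ((n : ℝ) - 2) / 2 * n ≤ (betaK (Gr n) 2 : ℝ) := by
      have hcast : ((((n - 1) / 2) * n : ℕ) : ℝ) ≤ (betaK (Gr n) 2 : ℝ) := by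
        exact_mod_cast hlb
      calc ((n : ℝ) - 2) / 2 * n ≤ (((n - 1) / 2 : ℕ) : ℝ) * n := by
            have hn0 : (0:ℝ) ≤ (n:ℝ) := by positivity
            nlinarith
        _ = ((((n - 1) / 2) * n : ℕ) : ℝ) := by push_cast; ring
        _ ≤ _ := hcast
    have hnpos : (0:ℝ) < (n : ℝ) ^ 2 := by positivity
    rw [le_div_iff₀ hnpos]
    have hne : (n : ℝ) ≠ 0 := by positivity
    have : (1 / 2 - 1 / (n:ℝ)) * (n:ℝ) ^ 2 = ((n:ℝ) - 2) / 2 * n := by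
      field_simp
    rw [this]
    exact hB
  · filter_upwards [Filter.eventually_ge_atTop 5] with n hn
    haveI : NeZero n := ⟨by omega⟩
    have hub : 2 * betaK (Gr n) 2 ≤ n ^ 2 := beta_upper hn
    have hcast : 2 * (betaK (Gr n) 2 : ℝ) ≤ (n : ℝ) ^ 2 := by exact_mod_cast hub
    have hnpos : (0:ℝ) < (n : ℝ) ^ 2 := by positivity
    rw [div_le_iff₀ hnpos]
    linarith
end
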